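/- arXiv:1604.00520 — 5 statements merged into one kernel-verified Lean document; each statement's English description precedes it below -/
import Mathlib

section
/- Let X be a compact topological space equipped with a positive Radon measure ν with ν(X) < ∞ and let 1 ≤ p ≤ ∞. Suppose u_n → u in L^p(X,ν) as n → ∞, where for p = 1 one additionally assumes u_n, u ∈ C(X), and for each n let μ_p^X(u_n) and μ_p^X(u) denote the unique minimizers of λ ↦ ‖u_n − λ‖_{L^p(X,ν)} and λ ↦ ‖u − λ‖_{L^p(X,ν)} respectively (assumed to exist and be unique). Then μ_p^X(u_n) → μ_p^X(u) as n → ∞. In particular, this holds for any p ∈ [1,∞] when u_n ∈ C(X) converges to u uniformly on X. -/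
open MeasureTheory Filter
open scoped ENNReal

/-- **Continuity of the `p`-mean.** On a compact topological space `X` with
a positive Radon measure `ν` of finite total mass, let `1 ≤ p ≤ ∞` and suppose
`u n → v` in `L^p(X,ν)` (with `u n, v` continuous in the case `p = 1`). If `μ n` is the
unique minimizer of `λ ↦ ‖u n − λ‖_{L^p}` and `μv` the unique minimizer of
`λ ↦ ‖v − λ‖_{L^p}`, then `μ n → μv`. -/
theorem p_mean_continuity
    {X : Type*} [TopologicalSpace X] [CompactSpace X] [MeasurableSpace X] [BorelSpace X]
    (ν : Measure X) [ν.Regular] [IsFiniteMeasure ν] (hν : ν ≠ 0)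
    (p : ℝ≥0∞) (hp : 1 ≤ p)
    (u : ℕ → X → ℝ) (v : X → ℝ)
    (hu : ∀ n, MemLp (u n) p ν) (hv : MemLp v p ν)
    (hcont : p = 1 → Continuous v ∧ ∀ n, Continuous (u n))
    (hconv : Tendsto (fun n => eLpNorm (fun y => u n y - v y) p ν) atTop (nhds 0))
    (μ : ℕ → ℝ) (μv : ℝ)
    (hμ : ∀ n, ∀ lam : ℝ,
      eLpNorm (fun y => u n y - μ n) p ν ≤ eLpNorm (fun y => u n y - lam) p ν)
    (hμuniq : ∀ n, ∀ m : ℝ,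
      (∀ lam : ℝ, eLpNorm (fun y => u n y - m) p ν ≤ eLpNorm (fun y => u n y - lam) p ν) →
      m = μ n)
    (hμv : ∀ lam : ℝ,
      eLpNorm (fun y => v y - μv) p ν ≤ eLpNorm (fun y => v y - lam) p ν)
    (hμvuniq : ∀ m : ℝ,
      (∀ lam : ℝ, eLpNorm (fun y => v y - m) p ν ≤ eLpNorm (fun y => v y - lam) p ν) →
      m = μv) :
    Tendsto μ atTop (nhds μv) := by
  set f : ℝ → ℝ≥0∞ := fun lam => eLpNorm (fun y => v y - lam) p ν with hfdef
  have hmem : ∀ lam : ℝ, MemLp (fun y => v y - lam) p ν := fun lam =>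
    hv.sub (memLp_const lam)
  have hfin : ∀ lam, f lam ≠ ∞ := fun lam => (hmem lam).eLpNorm_lt_top.ne
  -- convexity of f
  have hconvex : ∀ (l₁ l₂ t : ℝ), 0 ≤ t → t ≤ 1 →
      f ((1-t)*l₁ + t*l₂) ≤ ENNReal.ofReal (1-t) * f l₁ + ENNReal.ofReal t * f l₂ := by
    intro l₁ l₂ t ht0 ht1
    have heq : (fun y => v y - ((1-t)*l₁ + t*l₂))
        = (1-t) • (fun y => v y - l₁) + t • (fun y => v y - l₂) := by
      funext y; simp only [Pi.add_apply, Pi.smul_apply, smul_eq_mul]; ring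
    calc f ((1-t)*l₁ + t*l₂)
        = eLpNorm ((1-t) • (fun y => v y - l₁) + t • (fun y => v y - l₂)) p ν := by
          rw [hfdef]; simp only [heq]
      _ ≤ eLpNorm ((1-t) • (fun y => v y - l₁)) p ν
            + eLpNorm (t • fun y => v y - l₂) p ν :=
          eLpNorm_add_le (((hmem l₁).const_smul _).aestronglyMeasurable)
            (((hmem l₂).const_smul _).aestronglyMeasurable) hp
      _ = ENNReal.ofReal (1-t) * f l₁ + ENNReal.ofReal t * f l₂ := by
          rw [eLpNorm_const_smul, eLpNorm_const_smul,
            Real.enorm_eq_ofReal (by linarith), Real.enorm_eq_ofReal ht0]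
  -- strict minimality
  have hstrict : ∀ m : ℝ, m ≠ μv → f μv < f m := by
    intro m hm
    refine lt_of_le_of_ne (hμv m) (fun h => hm (hμvuniq m (fun lam => ?_)))
    exact le_trans (le_of_eq h.symm) (hμv lam)
  -- coercivity away from the minimizer
  have key : ∀ (δ : ℝ), 0 < δ → ∀ lam : ℝ, δ ≤ |lam - μv| →
      min (f (μv - δ)) (f (μv + δ)) ≤ f lam := by
    intro δ hδ lam hlam
    have main : ∀ (s m : ℝ), δ ≤ s → m = μv + (δ/s) * s →
        (∀ t : ℝ, (1-t)*μv + t*(μv + s) = μv + t*s) → f (μv + δ) ≤ f (μv + s) ∨ True := by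
      intro _ _ _ _ _; right; trivial
    -- we handle both sides via a common argument
    have side : ∀ s : ℝ, δ ≤ |s| → f (μv + (δ / |s| * s / |s| * |s|)) ≤ f (μv + s) ∨ True := by
      intro _ _; right; trivial
    clear main side
    have core : ∀ s : ℝ, δ ≤ s → ∀ w : ℝ, ((1 - δ/s)*μv + (δ/s)*w = μv + δ → w - μv = s →
        f (μv + δ) ≤ f w) := by
      intro s hs w hw hws
      have hs0 : 0 < s := lt_of_lt_of_le hδ hs
      have ht0 : 0 < δ / s := div_pos hδ hs0
      have ht1 : δ / s ≤ 1 := (div_le_one hs0).mpr hs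
      by_contra hlt
      push_neg at hlt
      have hcx := hconvex μv w (δ/s) ht0.le ht1
      rw [hw] at hcx
      have hne : μv + δ ≠ μv := by intro h; linarith [add_right_cancel (a := μv) (b := δ) (c := 0) (by linarith)]
      have hsm : f μv < f (μv + δ) := hstrict _ (by intro h; nlinarith [congrArg (· - μv) h])
      have h1 : ENNReal.ofReal (1 - δ/s) * f μv ≤ ENNReal.ofReal (1 - δ/s) * f (μv + δ) :=
        mul_le_mul_right hsm.le _
      have h2 : ENNReal.ofReal (δ/s) * f w < ENNReal.ofReal (δ/s) * f (μv + δ) := by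
        rw [ENNReal.mul_lt_mul_iff_right (by simpa using ht0) ENNReal.ofReal_ne_top]
        exact hlt
      have hsum : ENNReal.ofReal (1 - δ/s) * f (μv + δ) + ENNReal.ofReal (δ/s) * f (μv + δ)
          = f (μv + δ) := by
        rw [← add_mul, ← ENNReal.ofReal_add (by linarith) ht0.le]
        norm_num
      have : f (μv + δ) < f (μv + δ) := by
        calc f (μv + δ) ≤ ENNReal.ofReal (1 - δ/s) * f μv + ENNReal.ofReal (δ/s) * f w := hcx
          _ < ENNReal.ofReal (1 - δ/s) * f (μv + δ) + ENNReal.ofReal (δ/s) * f (μv + δ) :=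
            ENNReal.add_lt_add_of_le_of_lt
              (ENNReal.mul_ne_top ENNReal.ofReal_ne_top (hfin _)) h1 h2
          _ = f (μv + δ) := hsum
      exact absurd this (lt_irrefl _)
    rcases le_abs.mp hlam with h | h
    · -- lam - μv ≥ δ
      refine le_trans (min_le_right _ _) (core (lam - μv) h lam ?_ rfl)
      have hmul : δ / (lam - μv) * (lam - μv) = δ :=
        div_mul_cancel₀ _ (ne_of_gt (lt_of_lt_of_le hδ h))
      linear_combination hmul
    · -- μv - lam ≥ δ
      have h' : δ ≤ μv - lam := by linarith [neg_sub lam μv ▸ h]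
      -- symmetric: use core with reflected function? Instead prove directly
      -- reuse core with s := μv - lam and reflection: need f(μv - δ) ≤ f lam
      -- do a mirrored core inline
      refine le_trans (min_le_left _ _) ?_
      have hs0 : 0 < μv - lam := lt_of_lt_of_le hδ h'
      set s := μv - lam with hsdef
      set t := δ / s with htdef
      have ht0 : 0 < t := div_pos hδ hs0
      have ht1 : t ≤ 1 := (div_le_one hs0).mpr h'
      by_contra hlt
      push_neg at hlt
      have hcx := hconvex μv lam t ht0.le ht1
      have hw : (1 - t)*μv + t*lam = μv - δ := by
        have : t * s = δ := div_mul_cancel₀ δ hs0.ne'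
        have hl : lam = μv - s := by rw [hsdef]; ring
        rw [hl]; nlinarith [this]
      rw [hw] at hcx
      have hsm : f μv < f (μv - δ) := hstrict _ (by intro hh; nlinarith [congrArg (· - μv) hh])
      have h1 : ENNReal.ofReal (1 - t) * f μv ≤ ENNReal.ofReal (1 - t) * f (μv - δ) :=
        mul_le_mul_right hsm.le _
      have h2 : ENNReal.ofReal t * f lam < ENNReal.ofReal t * f (μv - δ) := by
        rw [ENNReal.mul_lt_mul_iff_right (by simpa using ht0) ENNReal.ofReal_ne_top]
        exact hlt
      have hsum : ENNReal.ofReal (1 - t) * f (μv - δ) + ENNReal.ofReal t * f (μv - δ)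
          = f (μv - δ) := by
        rw [← add_mul, ← ENNReal.ofReal_add (by linarith) ht0.le]
        norm_num
      have : f (μv - δ) < f (μv - δ) := by
        calc f (μv - δ) ≤ ENNReal.ofReal (1 - t) * f μv + ENNReal.ofReal t * f lam := hcx
          _ < ENNReal.ofReal (1 - t) * f (μv - δ) + ENNReal.ofReal t * f (μv - δ) :=
            ENNReal.add_lt_add_of_le_of_lt
              (ENNReal.mul_ne_top ENNReal.ofReal_ne_top (hfin _)) h1 h2
          _ = f (μv - δ) := hsum
      exact absurd this (lt_irrefl _)
  -- upper bound on f (μ n)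
  have hub : ∀ n, f (μ n) ≤ 2 * eLpNorm (fun y => u n y - v y) p ν + f μv := by
    intro n
    have e1 : (fun y => v y - μ n) = (fun y => (v y - u n y) + (u n y - μ n)) := by
      funext y; ring
    have e2 : (fun y => u n y - μv) = (fun y => (u n y - v y) + (v y - μv)) := by
      funext y; ring
    have e3 : (fun y => v y - u n y) = (-fun y => u n y - v y) := by
      funext y; simp
    have m1 : AEStronglyMeasurable (fun y => v y - u n y) ν :=
      (hv.sub (hu n)).aestronglyMeasurable
    have m2 : AEStronglyMeasurable (fun y => u n y - μ n) ν :=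
      ((hu n).sub (memLp_const _)).aestronglyMeasurable
    have m3 : AEStronglyMeasurable (fun y => u n y - v y) ν :=
      ((hu n).sub hv).aestronglyMeasurable
    have m4 : AEStronglyMeasurable (fun y => v y - μv) ν := (hmem μv).aestronglyMeasurable
    calc f (μ n) = eLpNorm (fun y => (v y - u n y) + (u n y - μ n)) p ν := by
            rw [hfdef]; simp only [← e1]
      _ ≤ eLpNorm (fun y => v y - u n y) p ν + eLpNorm (fun y => u n y - μ n) p ν :=
            eLpNorm_add_le m1 m2 hp
      _ ≤ eLpNorm (fun y => u n y - v y) p ν + eLpNorm (fun y => u n y - μv) p ν := by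
            gcongr
            · rw [e3, eLpNorm_neg]
            · exact hμ n μv
      _ ≤ eLpNorm (fun y => u n y - v y) p ν
            + (eLpNorm (fun y => u n y - v y) p ν + eLpNorm (fun y => v y - μv) p ν) := by
            gcongr
            rw [e2]
            exact eLpNorm_add_le m3 m4 hp
      _ = 2 * eLpNorm (fun y => u n y - v y) p ν + f μv := by rw [hfdef]; ring
  -- limit of the upper bound
  have hlim : Tendsto (fun n => 2 * eLpNorm (fun y => u n y - v y) p ν + f μv)
      atTop (nhds (f μv)) := by
    have h2 : Tendsto (fun n => 2 * eLpNorm (fun y => u n y - v y) p ν) atTop (nhds 0) := by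
      have := ENNReal.Tendsto.const_mul (a := 2) hconv (Or.inr (by norm_num))
      simpa using this
    simpa using h2.add (tendsto_const_nhds (x := f μv))
  -- conclusion
  rw [Metric.tendsto_atTop]
  intro ε hε
  set δ := ε / 2 with hδdef
  have hδ : 0 < δ := by positivity
  have hc : f μv < min (f (μv - δ)) (f (μv + δ)) :=
    lt_min (hstrict _ (by intro h; nlinarith [congrArg (· - μv) h]))
      (hstrict _ (by intro h; nlinarith [congrArg (· - μv) h]))
  have hev : ∀ᶠ n in atTop,
      2 * eLpNorm (fun y => u n y - v y) p ν + f μv < min (f (μv - δ)) (f (μv + δ)) :=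
    hlim.eventually_lt_const hc
  rcases eventually_atTop.mp hev with ⟨N, hN⟩
  refine ⟨N, fun n hn => ?_⟩
  have hfn : f (μ n) < min (f (μv - δ)) (f (μv + δ)) := lt_of_le_of_lt (hub n) (hN n hn)
  have : ¬ δ ≤ |μ n - μv| := fun h => absurd (lt_of_le_of_lt (key δ hδ (μ n) h) hfn) (lt_irrefl _)
  rw [Real.dist_eq]
  linarith [not_le.mp this, half_lt_self hε]
end

section
/- Let X be a compact topological space equipped with a positive Radon measure ν with ν(X) < ∞ and let 1 ≤ p ≤ ∞. Let u and v be two functions in L^p(X,ν) for 1 < p ≤ ∞, or in C(X) for p = 1, and let μ_p^X(u), μ_p^X(v) be the unique minimizers of λ ↦ ‖u − λ‖_{L^p(X,ν)} and λ ↦ ‖v − λ‖_{L^p(X,ν)} respectively. If u ≤ v ν-a.e. on X, then μ_p^X(u) ≤ μ_p^X(v). -/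
open MeasureTheory
open scoped ENNReal

private lemma convex_spread {φ : ℝ → ℝ} (hφ : ConvexOn ℝ Set.univ φ)
    {c d x y : ℝ} (h1 : c ≤ x) (h2 : x ≤ d) (hsum : x + y = c + d) :
    φ x + φ y ≤ φ c + φ d := by
  rcases eq_or_lt_of_le (h1.trans h2) with hcd | hcd
  · have hx : x = c := le_antisymm (hcd ▸ h2) h1
    have hy : y = d := by linarith
    simp [hx, hy, add_comm]
  · set θ : ℝ := (d - x) / (d - c) with hθdef
    have hdc : 0 < d - c := by linarith
    have hθ0 : 0 ≤ θ := div_nonneg (by linarith) hdc.le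
    have hθ1 : θ ≤ 1 := (div_le_one hdc).2 (by linarith)
    have key : θ * (d - c) = d - x := div_mul_cancel₀ _ hdc.ne'
    have hx' : x = θ • c + (1 - θ) • d := by
      simp only [smul_eq_mul]; nlinarith [key]
    have hy' : y = (1 - θ) • c + θ • d := by
      simp only [smul_eq_mul]; nlinarith [key]
    have A := hφ.2 (Set.mem_univ c) (Set.mem_univ d) hθ0 (by linarith : (0:ℝ) ≤ 1 - θ)
      (by ring)
    have B := hφ.2 (Set.mem_univ c) (Set.mem_univ d) (by linarith : (0:ℝ) ≤ 1 - θ) hθ0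
      (by ring)
    rw [← hx'] at A
    rw [← hy'] at B
    simp only [smul_eq_mul] at A B
    linarith

private lemma abs_rpow_convexOn {p : ℝ} (hp : 1 ≤ p) :
    ConvexOn ℝ Set.univ (fun r : ℝ => |r| ^ p) := by
  have himg : abs '' Set.univ = Set.Ici (0 : ℝ) := by
    ext y
    constructor
    · rintro ⟨x, -, rfl⟩; exact abs_nonneg x
    · intro hy; exact ⟨y, Set.mem_univ y, abs_of_nonneg hy⟩
  have habs : ConvexOn ℝ Set.univ (abs : ℝ → ℝ) := by
    have h : (abs : ℝ → ℝ) = norm := funext fun x => (Real.norm_eq_abs x).symm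
    rw [h]; exact convexOn_univ_norm
  have hmono : MonotoneOn (fun x : ℝ => x ^ p) (abs '' Set.univ) := by
    rw [himg]
    intro x hx y _ hxy
    exact Real.rpow_le_rpow hx hxy (by linarith)
  have hconv : ConvexOn ℝ (abs '' Set.univ) (fun x : ℝ => x ^ p) := by
    rw [himg]; exact convexOn_rpow hp
  exact ConvexOn.comp hconv habs hmono

private lemma rpow_submodular {p : ℝ} (hp : 1 ≤ p) {t s a b : ℝ}
    (hts : t ≤ s) (hba : b ≤ a) :
    |t - b| ^ p + |s - a| ^ p ≤ |t - a| ^ p + |s - b| ^ p := by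
  have := convex_spread (abs_rpow_convexOn hp)
    (c := t - a) (d := s - b) (x := t - b) (y := s - a)
    (by linarith) (by linarith) (by ring)
  linarith

private lemma abs_max_submodular {t s a b : ℝ} (hts : t ≤ s) (hba : b ≤ a) :
    |t - b| ⊔ |s - a| ≤ |t - a| ⊔ |s - b| := by
  refine sup_le ?_ ?_
  · rcases le_total t b with h | h
    · calc |t - b| = b - t := by rw [abs_sub_comm]; exact abs_of_nonneg (by linarith)
        _ ≤ a - t := by linarith
        _ ≤ |t - a| := by rw [abs_sub_comm]; exact le_abs_self _
        _ ≤ |t - a| ⊔ |s - b| := le_max_left _ _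
    · calc |t - b| = t - b := abs_of_nonneg (by linarith)
        _ ≤ s - b := by linarith
        _ ≤ |s - b| := le_abs_self _
        _ ≤ |t - a| ⊔ |s - b| := le_max_right _ _
  · rcases le_total s a with h | h
    · calc |s - a| = a - s := by rw [abs_sub_comm]; exact abs_of_nonneg (by linarith)
        _ ≤ a - t := by linarith
        _ ≤ |t - a| := by rw [abs_sub_comm]; exact le_abs_self _
        _ ≤ |t - a| ⊔ |s - b| := le_max_left _ _
    · calc |s - a| = s - a := abs_of_nonneg (by linarith)
        _ ≤ s - b := by linarith
        _ ≤ |s - b| := le_abs_self _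
        _ ≤ |t - a| ⊔ |s - b| := le_max_right _ _

/-- **Monotonicity of the `p`-mean.** On a compact topological space `X`
with a positive Radon measure `ν` of finite total mass, let `1 ≤ p ≤ ∞` and let
`u, v ∈ L^p(X,ν)` (continuous in the case `p = 1`) with unique `p`-means `μu, μv`.
If `u ≤ v` ν-a.e. on `X`, then `μu ≤ μv`. -/
theorem p_mean_monotonicity
    {X : Type*} [TopologicalSpace X] [CompactSpace X] [MeasurableSpace X] [BorelSpace X]
    (ν : Measure X) [ν.Regular] [IsFiniteMeasure ν] (hν : ν ≠ 0)
    (p : ℝ≥0∞) (hp : 1 ≤ p) (u v : X → ℝ)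
    (hu : MemLp u p ν) (hv : MemLp v p ν)
    (hcont : p = 1 → Continuous u ∧ Continuous v)
    (hle : ∀ᵐ y ∂ν, u y ≤ v y)
    (μu μv : ℝ)
    (hμu : ∀ lam : ℝ,
      eLpNorm (fun y => u y - μu) p ν ≤ eLpNorm (fun y => u y - lam) p ν)
    (hμuuniq : ∀ m : ℝ,
      (∀ lam : ℝ, eLpNorm (fun y => u y - m) p ν ≤ eLpNorm (fun y => u y - lam) p ν) →
      m = μu)
    (hμv : ∀ lam : ℝ,
      eLpNorm (fun y => v y - μv) p ν ≤ eLpNorm (fun y => v y - lam) p ν)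
    (hμvuniq : ∀ m : ℝ,
      (∀ lam : ℝ, eLpNorm (fun y => v y - m) p ν ≤ eLpNorm (fun y => v y - lam) p ν) →
      m = μv) :
    μu ≤ μv := by
  by_contra hcon
  push_neg at hcon
  have hba : μv ≤ μu := hcon.le
  have key : eLpNorm (fun y => u y - μv) p ν ≤ eLpNorm (fun y => u y - μu) p ν ∨
      eLpNorm (fun y => v y - μu) p ν ≤ eLpNorm (fun y => v y - μv) p ν := by
    rcases eq_or_ne p ∞ with hptop | hptop
    · -- p = ∞ case
      subst hptop
      set A := eLpNorm (fun y => u y - μu) ∞ ν with hA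
      set B := eLpNorm (fun y => v y - μv) ∞ ν with hB
      have hAe : A = essSup (fun x => (‖u x - μu‖₊ : ℝ≥0∞)) ν := by
        rw [hA, eLpNorm_exponent_top, eLpNormEssSup]; rfl
      have hBe : B = essSup (fun x => (‖v x - μv‖₊ : ℝ≥0∞)) ν := by
        rw [hB, eLpNorm_exponent_top, eLpNormEssSup]; rfl
      have haeA : ∀ᵐ x ∂ν, (‖u x - μu‖₊ : ℝ≥0∞) ≤ A := by
        rw [hAe]; exact ENNReal.ae_le_essSup _
      have haeB : ∀ᵐ x ∂ν, (‖v x - μv‖₊ : ℝ≥0∞) ≤ B := by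
        rw [hBe]; exact ENNReal.ae_le_essSup _
      have hptA : ∀ᵐ x ∂ν, (‖u x - μv‖₊ : ℝ≥0∞) ≤ A ⊔ B := by
        filter_upwards [hle, haeA, haeB] with x h1 h2 h3
        have hpt : |u x - μv| ≤ |u x - μu| ⊔ |v x - μv| :=
          le_trans (le_max_left _ _) (abs_max_submodular h1 hba)
        have : (‖u x - μv‖₊ : ℝ≥0∞) ≤ (‖u x - μu‖₊ : ℝ≥0∞) ⊔ (‖v x - μv‖₊ : ℝ≥0∞) := by
          rw [← enorm_eq_nnnorm, ← enorm_eq_nnnorm, ← enorm_eq_nnnorm,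
            Real.enorm_eq_ofReal_abs, Real.enorm_eq_ofReal_abs,
            Real.enorm_eq_ofReal_abs]
          rcases le_total (|u x - μu|) (|v x - μv|) with h | h
          · exact le_trans (ENNReal.ofReal_le_ofReal (by simpa [max_eq_right h] using hpt))
              (le_max_right _ _)
          · exact le_trans (ENNReal.ofReal_le_ofReal (by simpa [max_eq_left h] using hpt))
              (le_max_left _ _)
        exact this.trans (sup_le_sup h2 h3)
      have hptB : ∀ᵐ x ∂ν, (‖v x - μu‖₊ : ℝ≥0∞) ≤ A ⊔ B := by
        filter_upwards [hle, haeA, haeB] with x h1 h2 h3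
        have hpt : |v x - μu| ≤ |u x - μu| ⊔ |v x - μv| :=
          le_trans (le_max_right _ _) (abs_max_submodular h1 hba)
        have : (‖v x - μu‖₊ : ℝ≥0∞) ≤ (‖u x - μu‖₊ : ℝ≥0∞) ⊔ (‖v x - μv‖₊ : ℝ≥0∞) := by
          rw [← enorm_eq_nnnorm, ← enorm_eq_nnnorm, ← enorm_eq_nnnorm,
            Real.enorm_eq_ofReal_abs, Real.enorm_eq_ofReal_abs,
            Real.enorm_eq_ofReal_abs]
          rcases le_total (|u x - μu|) (|v x - μv|) with h | h
          · exact le_trans (ENNReal.ofReal_le_ofReal (by simpa [max_eq_right h] using hpt))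
              (le_max_right _ _)
          · exact le_trans (ENNReal.ofReal_le_ofReal (by simpa [max_eq_left h] using hpt))
              (le_max_left _ _)
        exact this.trans (sup_le_sup h2 h3)
      have hA' : eLpNorm (fun y => u y - μv) ∞ ν ≤ A ⊔ B := by
        rw [eLpNorm_exponent_top, eLpNormEssSup]
        exact essSup_le_of_ae_le _ hptA
      have hB' : eLpNorm (fun y => v y - μu) ∞ ν ≤ A ⊔ B := by
        rw [eLpNorm_exponent_top, eLpNormEssSup]
        exact essSup_le_of_ae_le _ hptB
      rcases le_total B A with h | h
      · left; rw [sup_eq_left.mpr h] at hA'; exact hA'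
      · right; rw [sup_eq_right.mpr h] at hB'; exact hB'
    · -- 1 ≤ p < ∞ case
      left
      have hp0 : p ≠ 0 := by
        intro h; rw [h] at hp; exact absurd hp (by simp)
      set q := p.toReal with hq
      have hq1 : 1 ≤ q := by
        rw [hq, ← ENNReal.toReal_one]
        exact ENNReal.toReal_mono hptop hp
      have hq0 : 0 < q := lt_of_lt_of_le zero_lt_one hq1
      set I : (X → ℝ) → ℝ≥0∞ := fun f => ∫⁻ x, (‖f x‖₊ : ℝ≥0∞) ^ q ∂ν with hI
      have heq : ∀ f : X → ℝ, eLpNorm f p ν = (I f) ^ (1 / q) := fun f =>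
        eLpNorm_eq_lintegral_rpow_enorm_toReal hp0 hptop
      -- finiteness
      have hfin : ∀ c : ℝ, I (fun y => v y - c) ≠ ∞ := by
        intro c
        have hm : MemLp (fun y => v y - c) p ν := hv.sub (memLp_const c)
        have := (eLpNorm_lt_top_iff_lintegral_rpow_enorm_lt_top hp0 hptop).1 hm.2
        exact this.ne
      -- minimality in terms of I
      have hIa : I (fun y => u y - μu) ≤ I (fun y => u y - μv) := by
        have := hμu μv
        rw [heq, heq] at this
        exact (ENNReal.rpow_le_rpow_iff (by positivity : (0:ℝ) < 1 / q)).1 this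
      have hIb : I (fun y => v y - μv) ≤ I (fun y => v y - μu) := by
        have := hμv μu
        rw [heq, heq] at this
        exact (ENNReal.rpow_le_rpow_iff (by positivity : (0:ℝ) < 1 / q)).1 this
      -- pointwise submodularity, integrated
      have hsum : I (fun y => u y - μv) + I (fun y => v y - μu) ≤
          I (fun y => u y - μu) + I (fun y => v y - μv) := by
        have hmeas : ∀ (f : X → ℝ), MemLp f p ν → ∀ c : ℝ,
            AEMeasurable (fun x => (‖f x - c‖₊ : ℝ≥0∞) ^ q) ν := by
          intro f hf c
          exact ((hf.sub (memLp_const c)).aestronglyMeasurable.enorm).pow_const q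
        rw [hI]
        rw [← lintegral_add_left' (hmeas u hu μv), ← lintegral_add_left' (hmeas u hu μu)]
        refine lintegral_mono_ae ?_
        filter_upwards [hle] with x hx
        have hreal := rpow_submodular hq1 hx hba (t := u x) (s := v x) (a := μu) (b := μv)
        have conv : ∀ r : ℝ, (‖r‖₊ : ℝ≥0∞) ^ q = ENNReal.ofReal (|r| ^ q) := by
          intro r
          rw [← enorm_eq_nnnorm, Real.enorm_eq_ofReal_abs, ENNReal.ofReal_rpow_of_nonneg (abs_nonneg r) hq0.le]
        rw [conv, conv, conv, conv, ← ENNReal.ofReal_add (by positivity) (by positivity),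
          ← ENNReal.ofReal_add (by positivity) (by positivity)]
        exact ENNReal.ofReal_le_ofReal hreal
      -- conclude I (u - μv) ≤ I (u - μu)
      have hIle : I (fun y => u y - μv) ≤ I (fun y => u y - μu) := by
        have h1 : I (fun y => u y - μv) + I (fun y => v y - μu) ≤
            I (fun y => u y - μu) + I (fun y => v y - μu) :=
          hsum.trans (add_le_add_right hIb _)
        exact (ENNReal.add_le_add_iff_right (hfin μu)).1 h1
      rw [heq, heq]
      exact ENNReal.rpow_le_rpow hIle (by positivity)
  rcases key with h | h
  · have hmin : ∀ lam : ℝ,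
        eLpNorm (fun y => u y - μv) p ν ≤ eLpNorm (fun y => u y - lam) p ν :=
      fun lam => h.trans (hμu lam)
    have := hμuuniq μv hmin
    exact absurd this (ne_of_lt hcon)
  · have hmin : ∀ lam : ℝ,
        eLpNorm (fun y => v y - μu) p ν ≤ eLpNorm (fun y => v y - lam) p ν :=
      fun lam => h.trans (hμv lam)
    have := hμvuniq μu hmin
    exact absurd this (ne_of_gt hcon)
end

section
/- Let N ≥ 2, fix x ∈ ℝ^N, ξ ∈ ℝ^N \ {0}, and a symmetric N×N real matrix A, and let q be the quadratic function q(y) = c + ξ·(y−x) + (1/2)⟨A(y−x), y−x⟩ for some c ∈ ℝ. Then the ∞-mean of q over B_ε(x), namely μ_∞(ε,q)(x) = (min over B̄_ε(x) of q + max over B̄_ε(x) of q)/2, satisfies μ_∞(ε,q)(x) = q(x) + (ε²/2) ⟨Aξ,ξ⟩/|ξ|² + o(ε²) as ε → 0. -/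
open Filter Asymptotics
open scoped RealInnerProductSpace

lemma amgm_aux (k s : ℝ) : k * s ≤ (k ^ 2 + s ^ 2) / 2 := by
  nlinarith [sq_nonneg (k - s)]

lemma sqrt_ge_self_aux {e : ℝ} (he : 0 ≤ e) (he1 : e ≤ 1) : e ≤ Real.sqrt e := by
  have h1 : Real.sqrt e ≤ 1 := Real.sqrt_le_one.mpr he1
  have h2 : Real.sqrt e * Real.sqrt e = e := Real.mul_self_sqrt he
  nlinarith [Real.sqrt_nonneg e]

lemma key_pointwise {E : Type*} [NormedAddCommGroup E] [InnerProductSpace ℝ E]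
    (T : E →L[ℝ] E) (ξ z : E) (hξ : ξ ≠ 0) {ε : ℝ} (hε : 0 < ε) (hε1 : ε ≤ 1)
    (hεa : 2 * ‖T‖ * ε ≤ ‖ξ‖) (hz : ‖z‖ ≤ ε) :
    ⟪ξ, z⟫ + 1 / 2 * ⟪T z, z⟫ ≤
      ε * ‖ξ‖ + ε ^ 2 / 2 * ⟪T (‖ξ‖⁻¹ • ξ), ‖ξ‖⁻¹ • ξ⟫ +
        ‖T‖ ^ 2 / ‖ξ‖ * (ε ^ 2 * Real.sqrt ε) := by
  have hb : (0:ℝ) < ‖ξ‖ := norm_pos_iff.mpr hξ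
  set b : ℝ := ‖ξ‖ with hbdef
  set a : ℝ := ‖T‖ with hadef
  have ha : 0 ≤ a := norm_nonneg _
  set u : E := b⁻¹ • ξ with hudef
  have hu : ‖u‖ = 1 := by
    rw [hudef, norm_smul, norm_inv, norm_norm, inv_mul_cancel₀ hb.ne']
  set t : ℝ := ε * b - ⟪ξ, z⟫ with htdef
  have hinz : ⟪ξ, z⟫ ≤ b * ε := le_trans (real_inner_le_norm ξ z)
    (by exact mul_le_mul_of_nonneg_left hz hb.le)
  have ht : 0 ≤ t := by rw [htdef]; linarith [hinz]
  set w : E := z - ε • u with hwdef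
  have hzuw : z = ε • u + w := by rw [hwdef]; abel
  have hinzu : ⟪z, ε • u⟫ = ε / b * ⟪ξ, z⟫ := by
    rw [hudef, real_inner_smul_right, real_inner_smul_right, real_inner_comm]
    ring
  have hw2 : ‖w‖ ^ 2 ≤ 2 * ε / b * t := by
    have h1 : ‖w‖ ^ 2 = ‖z‖ ^ 2 - 2 * ⟪z, ε • u⟫ + ‖ε • u‖ ^ 2 := by
      rw [hwdef]; exact norm_sub_sq_real z (ε • u)
    have h2 : ‖ε • u‖ ^ 2 = ε ^ 2 := by
      rw [norm_smul, hu, Real.norm_eq_abs, abs_of_pos hε]; ring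
    have h3 : ‖z‖ ^ 2 ≤ ε ^ 2 := by nlinarith [norm_nonneg z]
    rw [h1, h2, hinzu]
    have : ⟪ξ, z⟫ = ε * b - t := by rw [htdef]; ring
    rw [this]
    have h5 : (ε ^ 2 - ‖z‖ ^ 2) * (b * b) ≥ 0 :=
      mul_nonneg (sub_nonneg.mpr h3) (by positivity)
    field_simp
    nlinarith [h5, hb.le, mul_nonneg (sub_nonneg.mpr h3) hb.le]
  -- cross term bounds
  have hTu : ‖T u‖ ≤ a := by simpa [hu] using T.le_opNorm u
  have hTw : ‖T w‖ ≤ a * ‖w‖ := T.le_opNorm w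
  have hc1 : ⟪T u, w⟫ ≤ a * ‖w‖ := le_trans (real_inner_le_norm _ _)
    (mul_le_mul_of_nonneg_right hTu (norm_nonneg _))
  have hc2 : ⟪T w, u⟫ ≤ a * ‖w‖ := le_trans (real_inner_le_norm _ _)
    (by rw [hu, mul_one]; exact hTw)
  have hc3 : ⟪T w, w⟫ ≤ a * ‖w‖ ^ 2 := le_trans (real_inner_le_norm _ _)
    (by nlinarith [norm_nonneg w])
  -- expansion
  have hexp : ⟪T z, z⟫ =
      ε ^ 2 * ⟪T u, u⟫ + ε * ⟪T u, w⟫ + ε * ⟪T w, u⟫ + ⟪T w, w⟫ := by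
    rw [hzuw]
    simp only [map_add, map_smul, inner_add_left, inner_add_right,
      real_inner_smul_left, real_inner_smul_right]
    ring
  -- sqrt bound for ‖w‖
  have hwle : ‖w‖ ≤ Real.sqrt (2 * ε / b) * Real.sqrt t := by
    rw [← Real.sqrt_mul (by positivity) t]
    have := Real.sqrt_le_sqrt hw2
    rwa [Real.sqrt_sq (norm_nonneg w)] at this
  -- AM-GM
  have hk2 : (ε * a * Real.sqrt (2 * ε / b)) ^ 2 = ε ^ 2 * a ^ 2 * (2 * ε / b) := by
    rw [mul_pow, mul_pow, Real.sq_sqrt (by positivity)]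
  have hst : Real.sqrt t ^ 2 = t := Real.sq_sqrt ht
  have hamgm : ε * a * ‖w‖ ≤ a ^ 2 * ε ^ 3 / b + t / 2 := by
    have h1 : ε * a * ‖w‖ ≤ ε * a * (Real.sqrt (2 * ε / b) * Real.sqrt t) :=
      mul_le_mul_of_nonneg_left hwle (by positivity)
    have h2 : (ε * a * Real.sqrt (2 * ε / b)) * Real.sqrt t ≤
        ((ε * a * Real.sqrt (2 * ε / b)) ^ 2 + Real.sqrt t ^ 2) / 2 :=
      amgm_aux _ _
    rw [hk2, hst] at h2
    have h3 : ε ^ 2 * a ^ 2 * (2 * ε / b) = 2 * (a ^ 2 * ε ^ 3 / b) := by ring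
    rw [h3] at h2
    linarith [h1, h2]
  -- quadratic in w bound
  have hquad : a / 2 * ‖w‖ ^ 2 ≤ t / 2 := by
    have h1 : a / 2 * ‖w‖ ^ 2 ≤ a / 2 * (2 * ε / b * t) :=
      mul_le_mul_of_nonneg_left hw2 (by positivity)
    have h2 : a / 2 * (2 * ε / b * t) ≤ t / 2 := by
      rw [div_mul_eq_mul_div, div_le_div_iff₀ (by norm_num) (by norm_num)]
      have : a * (2 * ε / b * t) * 2 = (2 * a * ε) * t * (2 / b) := by ring
      rw [this]
      have h4 : (2 * a * ε) * t ≤ b * t := mul_le_mul_of_nonneg_right hεa ht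
      calc (2 * a * ε) * t * (2 / b) ≤ b * t * (2 / b) :=
            mul_le_mul_of_nonneg_right h4 (by positivity)
        _ = t * 2 := by field_simp
    linarith
  -- ε^3 ≤ ε^2 √ε
  have hsqε : ε ≤ Real.sqrt ε := sqrt_ge_self_aux hε.le hε1
  have he3 : a ^ 2 * ε ^ 3 / b ≤ a ^ 2 / b * (ε ^ 2 * Real.sqrt ε) := by
    rw [div_mul_eq_mul_div, div_le_div_iff₀ hb hb]
    have h1 : a ^ 2 * ε ^ 2 * ε ≤ a ^ 2 * ε ^ 2 * Real.sqrt ε :=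
      mul_le_mul_of_nonneg_left hsqε (by positivity)
    calc a ^ 2 * ε ^ 3 * b = (a ^ 2 * ε ^ 2 * ε) * b := by ring
      _ ≤ (a ^ 2 * ε ^ 2 * Real.sqrt ε) * b :=
          mul_le_mul_of_nonneg_right h1 hb.le
      _ = a ^ 2 * (ε ^ 2 * Real.sqrt ε) * b := by ring
  -- assemble
  have hτ : ⟪T (‖ξ‖⁻¹ • ξ), ‖ξ‖⁻¹ • ξ⟫ = ⟪T u, u⟫ := rfl
  rw [hτ]
  have hlhs : ⟪ξ, z⟫ = ε * b - t := by rw [htdef]; ring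
  rw [hlhs, hexp]
  have e1 : ε * ⟪T u, w⟫ ≤ ε * (a * ‖w‖) := mul_le_mul_of_nonneg_left hc1 hε.le
  have e2 : ε * ⟪T w, u⟫ ≤ ε * (a * ‖w‖) := mul_le_mul_of_nonneg_left hc2 hε.le
  linarith only [e1, e2, hc3, hamgm, hquad, he3]

/-- For `N ≥ 2`, `ξ ≠ 0`, `A` symmetric and the quadratic function
`q(y) = c + ξ·(y−x) + (1/2)⟨A(y−x), y−x⟩`, the `∞`-mean of `q` on `B_ε(x)`, namely the
min-max mean `(min_{B̄_ε(x)} q + max_{B̄_ε(x)} q)/2`, satisfies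
`μ_∞(ε,q)(x) = q(x) + (ε²/2) ⟨Aξ,ξ⟩/|ξ|² + o(ε²)` as `ε → 0⁺`. -/
theorem infty_mean_quadratic_asymptotics
    {N : ℕ} (hN : 2 ≤ N)
    (x ξ : EuclideanSpace ℝ (Fin N)) (hξ : ξ ≠ 0)
    (A : Matrix (Fin N) (Fin N) ℝ) (hA : A.IsSymm) (c : ℝ)
    (q : EuclideanSpace ℝ (Fin N) → ℝ)
    (hq : ∀ y, q y = c + ⟪ξ, y - x⟫ + (1 / 2) * ⟪Matrix.toEuclideanLin A (y - x), y - x⟫) :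
    (fun ε : ℝ =>
        (sInf (q '' Metric.closedBall x ε) + sSup (q '' Metric.closedBall x ε)) / 2 -
          q x - ε ^ 2 / 2 * (⟪Matrix.toEuclideanLin A ξ, ξ⟫ / ‖ξ‖ ^ 2))
      =o[nhdsWithin 0 (Set.Ioi 0)] fun ε : ℝ => ε ^ 2 := by
  classical
  set T : EuclideanSpace ℝ (Fin N) →L[ℝ] EuclideanSpace ℝ (Fin N) :=
    LinearMap.toContinuousLinearMap (Matrix.toEuclideanLin A) with hTdef
  have hTapp : ∀ v : EuclideanSpace ℝ (Fin N), T v = Matrix.toEuclideanLin A v := fun v => rfl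
  have hb : (0:ℝ) < ‖ξ‖ := norm_pos_iff.mpr hξ
  set b : ℝ := ‖ξ‖ with hbdef
  set a : ℝ := ‖T‖ with hadef
  have ha : 0 ≤ a := norm_nonneg _
  set u : EuclideanSpace ℝ (Fin N) := b⁻¹ • ξ with hudef
  have hu : ‖u‖ = 1 := by
    rw [hudef, norm_smul, norm_inv, norm_norm, inv_mul_cancel₀ hb.ne']
  set τ : ℝ := ⟪T u, u⟫ with hτdef
  have hqx : q x = c := by
    rw [hq x, sub_self]
    simp
  have hτeq : ⟪Matrix.toEuclideanLin A ξ, ξ⟫ / ‖ξ‖ ^ 2 = τ := by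
    rw [hτdef, hudef, map_smul, real_inner_smul_left, real_inner_smul_right, ← hTapp ξ]
    rw [← hbdef, sq, div_eq_mul_inv, mul_inv]
    ring
  have hq' : ∀ y : EuclideanSpace ℝ (Fin N), q y = c + ⟪ξ, y - x⟫ + 1 / 2 * ⟪T (y - x), y - x⟫ := by
    intro y; rw [hq y, hTapp]
  -- the big-O bound with explicit constant
  have hbig : (fun ε : ℝ =>
        (sInf (q '' Metric.closedBall x ε) + sSup (q '' Metric.closedBall x ε)) / 2 -
          q x - ε ^ 2 / 2 * (⟪Matrix.toEuclideanLin A ξ, ξ⟫ / ‖ξ‖ ^ 2))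
      =O[nhdsWithin 0 (Set.Ioi 0)] fun ε : ℝ => Real.sqrt ε * ε ^ 2 := by
    rw [isBigO_iff]
    refine ⟨a ^ 2 / b, ?_⟩
    have hmem : Set.Ioo (0:ℝ) (min 1 (b / (2 * a + 1))) ∈ nhdsWithin 0 (Set.Ioi 0) := by
      apply Ioo_mem_nhdsGT_of_mem
      exact ⟨le_refl 0, lt_min one_pos (by positivity)⟩
    filter_upwards [hmem] with ε hεm
    obtain ⟨hε, hεlt⟩ := hεm
    have hε1 : ε ≤ 1 := le_of_lt (lt_of_lt_of_le hεlt (min_le_left _ _))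
    have hεa : 2 * a * ε ≤ b := by
      have h1 : ε < b / (2 * a + 1) := lt_of_lt_of_le hεlt (min_le_right _ _)
      have h2 : (2 * a + 1) * ε < b := by
        rw [mul_comm]
        exact (lt_div_iff₀ (by positivity)).mp h1
      nlinarith
    -- pointwise bounds on q over the ball
    have hub : ∀ y ∈ Metric.closedBall x ε,
        q y ≤ c + ε * b + ε ^ 2 / 2 * τ + a ^ 2 / b * (ε ^ 2 * Real.sqrt ε) := by
      intro y hy
      rw [hq' y]
      have hz : ‖y - x‖ ≤ ε := by rwa [← dist_eq_norm, ← Metric.mem_closedBall]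
      have := key_pointwise T ξ (y - x) hξ hε hε1 hεa hz
      linarith [this]
    have hlb : ∀ y ∈ Metric.closedBall x ε,
        c - ε * b + ε ^ 2 / 2 * τ - a ^ 2 / b * (ε ^ 2 * Real.sqrt ε) ≤ q y := by
      intro y hy
      rw [hq' y]
      have hz : ‖y - x‖ ≤ ε := by rwa [← dist_eq_norm, ← Metric.mem_closedBall]
      have hξ' : (-ξ : EuclideanSpace ℝ (Fin N)) ≠ 0 := neg_ne_zero.mpr hξ
      have hεa' : 2 * ‖-T‖ * ε ≤ ‖(-ξ : EuclideanSpace ℝ (Fin N))‖ := by rwa [norm_neg, norm_neg]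
      have hkey := key_pointwise (-T) (-ξ) (y - x) hξ' hε hε1 hεa' hz
      have h1 : ⟪(-ξ : EuclideanSpace ℝ (Fin N)), y - x⟫ = -⟪ξ, y - x⟫ := inner_neg_left _ _
      have h2 : ⟪(-T) (y - x), y - x⟫ = -⟪T (y - x), y - x⟫ := by
        rw [ContinuousLinearMap.neg_apply, inner_neg_left]
      have h3 : ⟪(-T) (‖(-ξ : EuclideanSpace ℝ (Fin N))‖⁻¹ • (-ξ)), ‖(-ξ : EuclideanSpace ℝ (Fin N))‖⁻¹ • (-ξ)⟫ = -τ := by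
        rw [norm_neg, smul_neg, ContinuousLinearMap.neg_apply, map_neg, neg_neg,
          inner_neg_right, hτdef, hudef]
      rw [h1, h2, h3, norm_neg, norm_neg] at hkey
      linarith [hkey]
    set S := q '' Metric.closedBall x ε with hSdef
    have hxS : q x ∈ S := Set.mem_image_of_mem q (Metric.mem_closedBall_self hε.le)
    have hSne : S.Nonempty := ⟨q x, hxS⟩
    have hBddA : BddAbove S := by
      refine ⟨c + ε * b + ε ^ 2 / 2 * τ + a ^ 2 / b * (ε ^ 2 * Real.sqrt ε), ?_⟩
      rintro _ ⟨y, hy, rfl⟩; exact hub y hy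
    have hBddB : BddBelow S := by
      refine ⟨c - ε * b + ε ^ 2 / 2 * τ - a ^ 2 / b * (ε ^ 2 * Real.sqrt ε), ?_⟩
      rintro _ ⟨y, hy, rfl⟩; exact hlb y hy
    have hMub : sSup S ≤ c + ε * b + ε ^ 2 / 2 * τ + a ^ 2 / b * (ε ^ 2 * Real.sqrt ε) := by
      apply csSup_le hSne
      rintro _ ⟨y, hy, rfl⟩; exact hub y hy
    have hmlb : c - ε * b + ε ^ 2 / 2 * τ - a ^ 2 / b * (ε ^ 2 * Real.sqrt ε) ≤ sInf S := by
      apply le_csInf hSne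
      rintro _ ⟨y, hy, rfl⟩; exact hlb y hy
    -- the two extremal test points
    have hmemp : x + ε • u ∈ Metric.closedBall x ε := by
      rw [Metric.mem_closedBall, dist_eq_norm]
      simp only [add_sub_cancel_left]
      rw [norm_smul, hu, Real.norm_eq_abs, abs_of_pos hε, mul_one]
    have hmemm : x - ε • u ∈ Metric.closedBall x ε := by
      rw [Metric.mem_closedBall, dist_eq_norm]
      simp only [sub_sub_cancel_left, norm_neg]
      rw [norm_smul, hu, Real.norm_eq_abs, abs_of_pos hε, mul_one]
    have hinξu : ⟪ξ, u⟫ = b := by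
      rw [hudef, real_inner_smul_right, real_inner_self_eq_norm_sq, ← hbdef, sq,
        inv_mul_cancel_left₀ hb.ne']
    have hqp : q (x + ε • u) = c + ε * b + ε ^ 2 / 2 * τ := by
      rw [hq' (x + ε • u)]
      simp only [add_sub_cancel_left]
      rw [real_inner_smul_right, hinξu, map_smul, real_inner_smul_left,
        real_inner_smul_right, hτdef]
      ring
    have hqm : q (x - ε • u) = c - ε * b + ε ^ 2 / 2 * τ := by
      rw [hq' (x - ε • u)]
      simp only [sub_sub_cancel_left]
      rw [inner_neg_right, real_inner_smul_right, hinξu, map_neg, map_smul,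
        inner_neg_neg, real_inner_smul_left, real_inner_smul_right, hτdef]
      ring
    have hMlb : c + ε * b + ε ^ 2 / 2 * τ ≤ sSup S := by
      rw [← hqp]; exact le_csSup hBddA (Set.mem_image_of_mem q hmemp)
    have hmub : sInf S ≤ c - ε * b + ε ^ 2 / 2 * τ := by
      rw [← hqm]; exact csInf_le hBddB (Set.mem_image_of_mem q hmemm)
    -- conclude the bound
    rw [hqx, hτeq]
    rw [Real.norm_eq_abs, Real.norm_eq_abs, abs_of_nonneg (by positivity : (0:ℝ) ≤ Real.sqrt ε * ε ^ 2)]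
    rw [abs_le]
    have hK : 0 ≤ a ^ 2 / b * (ε ^ 2 * Real.sqrt ε) := by positivity
    constructor
    · linarith only [hmlb, hMlb, hK]
    · linarith only [hMub, hmub, hK]
  -- the little-o part
  have hsmall : (fun ε : ℝ => Real.sqrt ε * ε ^ 2)
      =o[nhdsWithin 0 (Set.Ioi 0)] fun ε : ℝ => ε ^ 2 := by
    have hs : Tendsto Real.sqrt (nhdsWithin 0 (Set.Ioi 0)) (nhds 0) := by
      have h0 := (Real.continuous_sqrt.tendsto 0)
      rw [Real.sqrt_zero] at h0
      exact h0.mono_left nhdsWithin_le_nhds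
    have h1 : (fun ε : ℝ => Real.sqrt ε) =o[nhdsWithin 0 (Set.Ioi 0)] (fun _ => (1:ℝ)) :=
      (isLittleO_one_iff ℝ).mpr hs
    have h2 := h1.mul_isBigO (isBigO_refl (fun ε : ℝ => ε ^ 2) (nhdsWithin 0 (Set.Ioi 0)))
    simpa using h2
  exact hbig.trans_isLittleO hsmall
end

section
/- Let N ≥ 2, let 𝕊^{N−1} be the unit sphere in ℝ^N, let ξ ∈ ℝ^N \ {0}, let A be an N×N real symmetric matrix, and let 1 < p < ∞. Then ∫_{𝕊^{N−1}} |ξ·y|^{p−2} ⟨Ay, y⟩ dS_y / ∫_{𝕊^{N−1}} |ξ·y|^{p−2} dS_y = (1/(N+p−2)) { tr(A) + (p−2) ⟨Aξ,ξ⟩/|ξ|² }. -/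
open MeasureTheory Real Set Finset Metric




lemma integrable_abs_rpow_exp {s : ℝ} (hs : -1 < s) :
    Integrable (fun t : ℝ => |t| ^ s * Real.exp (-t ^ 2)) := by
  have hIoi : IntegrableOn (fun t : ℝ => |t| ^ s * Real.exp (-t ^ 2)) (Ioi 0) := by
    have h := integrableOn_rpow_mul_exp_neg_mul_sq one_pos hs
    simp only [neg_mul, one_mul] at h
    exact h.congr_fun (fun x hx => by rw [abs_of_pos hx]) measurableSet_Ioi
  rw [← integrableOn_univ, ← @Iio_union_Ici _ _ (0 : ℝ), integrableOn_union,
    integrableOn_Ici_iff_integrableOn_Ioi]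
  refine ⟨?_, hIoi⟩
  rw [← (Measure.measurePreserving_neg (volume : Measure ℝ)).integrableOn_comp_preimage
      (Homeomorph.neg ℝ).measurableEmbedding]
  simpa [Function.comp_def, neg_sq, abs_neg] using hIoi

lemma integrable_factor {s : ℝ} (hs : -1 < s) (k : ℕ) :
    Integrable (fun t : ℝ => |t| ^ s * t ^ k * Real.exp (-t ^ 2)) := by
  have hsk : (-1 : ℝ) < s + k := by
    have : (0:ℝ) ≤ k := Nat.cast_nonneg k
    linarith
  refine (integrable_abs_rpow_exp hsk).mono' ?_ ?_
  · exact (((measurable_abs.pow measurable_const).mul (measurable_id.pow_const k)).mul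
      ((measurable_id.pow_const 2).neg.exp)).aestronglyMeasurable
  · refine Filter.Eventually.of_forall (fun t => ?_)
    have h1 : ‖|t| ^ s * t ^ k * Real.exp (-t ^ 2)‖ = |t| ^ s * |t| ^ (k:ℕ) * Real.exp (-t ^ 2) := by
      simp [Real.norm_eq_abs, abs_mul, abs_pow, abs_abs,
        abs_of_nonneg (Real.exp_nonneg _), abs_of_nonneg (Real.rpow_nonneg (abs_nonneg t) s)]
    rw [h1]
    rcases eq_or_ne t 0 with rfl | ht
    · rcases Nat.eq_zero_or_pos k with rfl | hk
      · simp
      · simp [zero_pow hk.ne', Real.exp_nonneg, mul_nonneg, Real.rpow_nonneg]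
    · have habs : (0:ℝ) < |t| := abs_pos.2 ht
      rw [← Real.rpow_natCast |t| k, ← Real.rpow_add habs]



lemma moment_eq {s : ℝ} (hs : -1 < s) :
    ∫ t : ℝ, |t| ^ s * Real.exp (-t ^ 2) = Real.Gamma ((s + 1) / 2) := by
  have h1 : ∀ t : ℝ, |t| ^ s * Real.exp (-t ^ 2)
      = (fun u : ℝ => u ^ s * Real.exp (-u ^ 2)) |t| := by
    intro t; simp [sq_abs]
  calc ∫ t : ℝ, |t| ^ s * Real.exp (-t ^ 2)
      = ∫ t : ℝ, (fun u : ℝ => u ^ s * Real.exp (-u ^ 2)) |t| := by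
        exact integral_congr_ae (Filter.Eventually.of_forall h1)
    _ = 2 * ∫ t in Ioi (0:ℝ), t ^ s * Real.exp (-t ^ 2) :=
        integral_comp_abs (f := fun u : ℝ => u ^ s * Real.exp (-u ^ 2))
    _ = 2 * ∫ t in Ioi (0:ℝ), t ^ s * Real.exp (-t ^ (2:ℝ)) := by
        congr 1
        refine setIntegral_congr_fun measurableSet_Ioi (fun x hx => ?_)
        rw [← Real.rpow_natCast x 2]; norm_num
    _ = Real.Gamma ((s + 1) / 2) := by
        rw [integral_rpow_mul_exp_neg_rpow two_pos hs]; ring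

lemma moment_odd (s : ℝ) : ∫ t : ℝ, |t| ^ s * t ^ 1 * Real.exp (-t ^ 2) = 0 := by
  have h : ∀ t : ℝ, |(-t)| ^ s * (-t) ^ 1 * Real.exp (-(-t) ^ 2)
      = -(|t| ^ s * t ^ 1 * Real.exp (-t ^ 2)) := by
    intro t; rw [abs_neg]; ring
  have h2 : ∫ t : ℝ, |t| ^ s * t ^ 1 * Real.exp (-t ^ 2)
      = -∫ t : ℝ, |t| ^ s * t ^ 1 * Real.exp (-t ^ 2) := by
    conv_lhs => rw [← integral_neg_eq_self (fun t : ℝ => |t| ^ s * t ^ 1 * Real.exp (-t ^ 2))]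
    rw [← integral_neg]
    exact integral_congr_ae (Filter.Eventually.of_forall h)
  linarith

lemma radial_eq (n : ℕ) {q : ℝ} (hq : -1 < (n:ℝ) + q) :
    ∫ r in Ioi (0:ℝ), (r:ℝ) ^ n * (r ^ q * Real.exp (-r ^ 2))
      = (1/2) * Real.Gamma (((n:ℝ) + q + 1) / 2) := by
  have : ∀ r ∈ Ioi (0:ℝ), (r:ℝ) ^ n * (r ^ q * Real.exp (-r ^ 2))
      = r ^ ((n:ℝ) + q) * Real.exp (-r ^ (2:ℝ)) := by
    intro r hr
    rw [Real.rpow_add hr, ← Real.rpow_natCast r 2, ← Real.rpow_natCast r n]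
    norm_num; ring
  rw [setIntegral_congr_fun measurableSet_Ioi this, integral_rpow_mul_exp_neg_rpow two_pos hq]



lemma polar_eq {N : ℕ} [NeZero N]
    (F : EuclideanSpace ℝ (Fin N) → ℝ) (f : ℝ → ℝ)
    (G : Metric.sphere (0 : EuclideanSpace ℝ (Fin N)) 1 → ℝ)
    (h : ∀ (y : Metric.sphere (0 : EuclideanSpace ℝ (Fin N)) 1) (r : ℝ), 0 < r →
      F (r • (y : EuclideanSpace ℝ (Fin N))) = f r * G y) :
    ∫ x, F x = (∫ r in Ioi (0:ℝ), r ^ (N-1) * f r) *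
      ∫ y, G y ∂((volume : Measure (EuclideanSpace ℝ (Fin N))).toSphere) := by
  have hone : ‖EuclideanSpace.single (0 : Fin N) (1:ℝ)‖ = 1 := by
    simp [EuclideanSpace.norm_single]
  haveI : Nontrivial (EuclideanSpace ℝ (Fin N)) := by
    refine nontrivial_of_ne (EuclideanSpace.single (0 : Fin N) (1:ℝ)) 0 (fun hc => ?_)
    rw [hc] at hone; simp at hone
  have hdim : Module.finrank ℝ (EuclideanSpace ℝ (Fin N)) = N := finrank_euclideanSpace_fin
  set μ : Measure (EuclideanSpace ℝ (Fin N)) := volume with hμ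
  calc ∫ x, F x ∂μ
      = ∫ x : ({0}ᶜ : Set (EuclideanSpace ℝ (Fin N))), F x ∂(μ.comap (↑)) := by
        rw [integral_subtype_comap (measurableSet_singleton _).compl,
          MeasureTheory.restrict_compl_singleton]
    _ = ∫ z : Metric.sphere (0 : EuclideanSpace ℝ (Fin N)) 1 × Ioi (0:ℝ),
          G z.1 * f z.2 ∂(μ.toSphere.prod
            (Measure.volumeIoiPow (Module.finrank ℝ (EuclideanSpace ℝ (Fin N)) - 1))) := by
        rw [← μ.measurePreserving_homeomorphUnitSphereProd.integral_comp
          (Homeomorph.measurableEmbedding _) (fun z => G z.1 * f z.2)]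
        refine integral_congr_ae (Filter.Eventually.of_forall (fun x => ?_))
        have hx : (x : EuclideanSpace ℝ (Fin N)) ≠ 0 := x.2
        have hnorm : 0 < ‖(x : EuclideanSpace ℝ (Fin N))‖ := norm_pos_iff.2 hx
        have := h ⟨‖(x : EuclideanSpace ℝ (Fin N))‖⁻¹ • (x : EuclideanSpace ℝ (Fin N)), by
            rw [mem_sphere_zero_iff_norm, norm_smul, norm_inv, norm_norm,
              inv_mul_cancel₀ hnorm.ne']⟩ ‖(x : EuclideanSpace ℝ (Fin N))‖ hnorm
        rw [smul_inv_smul₀ hnorm.ne'] at this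
        dsimp only
        rw [this, mul_comm]
        congr 2
        · ext; simp [homeomorphUnitSphereProd]
        · simp [homeomorphUnitSphereProd]
    _ = (∫ r : Ioi (0:ℝ), f r ∂(Measure.volumeIoiPow
            (Module.finrank ℝ (EuclideanSpace ℝ (Fin N)) - 1))) * ∫ y, G y ∂μ.toSphere := by
        rw [integral_prod_mul G (fun r : Ioi (0:ℝ) => f r)]
        ring
    _ = (∫ r in Ioi (0:ℝ), r ^ (N-1) * f r) * ∫ y, G y ∂μ.toSphere := by
        congr 1
        simp only [Measure.volumeIoiPow, ENNReal.ofReal, hdim]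
        rw [integral_withDensity_eq_integral_smul
          ((measurable_subtype_coe.pow_const _).real_toNNReal),
          integral_subtype_comap measurableSet_Ioi
            (fun a : ℝ => Real.toNNReal (a ^ (N-1)) • f a)]
        refine setIntegral_congr_fun measurableSet_Ioi (fun x hx => ?_)
        rw [NNReal.smul_def, Real.coe_toNNReal _ (pow_nonneg hx.out.le _), smul_eq_mul]



lemma abs_rpow_sub_two_mul_sq {p : ℝ} (hp : 0 < p) (t : ℝ) :
    |t| ^ (p - 2) * t ^ (2:ℕ) = |t| ^ p := by
  rcases eq_or_ne t 0 with rfl | ht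
  · simp [Real.zero_rpow hp.ne']
  · have h := abs_pos.2 ht
    rw [← sq_abs, ← Real.rpow_natCast |t| 2, ← Real.rpow_add h]
    norm_num

lemma moment_sq {s : ℝ} (hs : -1 < s) :
    ∫ t : ℝ, |t| ^ s * t ^ (2:ℕ) * Real.exp (-t ^ 2) = Real.Gamma ((s + 3) / 2) := by
  have h : ∀ t : ℝ, |t| ^ s * t ^ (2:ℕ) * Real.exp (-t ^ 2)
      = |t| ^ (s + 2) * Real.exp (-t ^ 2) := by
    intro t
    have h2 := abs_rpow_sub_two_mul_sq (show (0:ℝ) < s + 2 by linarith) t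
    rw [show s + 2 - 2 = s by ring] at h2
    rw [h2]
  rw [integral_congr_ae (Filter.Eventually.of_forall h), moment_eq (by linarith)]
  congr 1
  ring

section PiSide

noncomputable def hfac (p : ℝ) {N : ℕ} [NeZero N] (i j k : Fin N) : ℝ → ℝ :=
  fun t => |t| ^ (if k = 0 then p - 2 else 0) *
    t ^ ((if k = i then 1 else 0) + (if k = j then 1 else 0) : ℕ) * Real.exp (-t ^ 2)

noncomputable def hden (p : ℝ) {N : ℕ} [NeZero N] (k : Fin N) : ℝ → ℝ :=
  fun t => |t| ^ (if k = 0 then p - 2 else 0) * Real.exp (-t ^ 2)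

variable {N : ℕ} [NeZero N] {p : ℝ}

lemma hfac_integrable (hp : 1 < p) (i j k : Fin N) : Integrable (hfac p i j k) := by
  unfold hfac
  split
  · exact integrable_factor (by linarith) _
  · exact integrable_factor (by norm_num) _

lemma hden_integrable (hp : 1 < p) (k : Fin N) : Integrable (hden p k) := by
  unfold hden
  split
  · exact integrable_abs_rpow_exp (by linarith)
  · exact integrable_abs_rpow_exp (by norm_num)

lemma hfac_prod (i j : Fin N) (x : Fin N → ℝ) :
    |x 0| ^ (p - 2) * (x i * x j) * Real.exp (-∑ k, x k ^ 2)
      = ∏ k, hfac p i j k (x k) := by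
  unfold hfac
  rw [Finset.prod_mul_distrib, Finset.prod_mul_distrib]
  have h1 : (∏ k, |x k| ^ (if k = 0 then p - 2 else 0)) = |x 0| ^ (p - 2) := by
    rw [Finset.prod_eq_single 0 (fun k _ hk => by rw [if_neg hk, Real.rpow_zero])
      (fun hc => absurd (Finset.mem_univ _) hc), if_pos rfl]
  have h2 : (∏ k, x k ^ ((if k = i then 1 else 0) + (if k = j then 1 else 0) : ℕ))
      = x i * x j := by
    simp_rw [pow_add]
    rw [Finset.prod_mul_distrib,
      Finset.prod_eq_single i (fun k _ hk => by rw [if_neg hk, pow_zero])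
      (fun hc => absurd (Finset.mem_univ _) hc),
      Finset.prod_eq_single j (fun k _ hk => by rw [if_neg hk, pow_zero])
      (fun hc => absurd (Finset.mem_univ _) hc), if_pos rfl, if_pos rfl, pow_one, pow_one]
  have h3 : (∏ k, Real.exp (-x k ^ 2)) = Real.exp (-∑ k, x k ^ 2) := by
    rw [← Real.exp_sum]
    congr 1
    rw [← Finset.sum_neg_distrib]
  rw [h1, h2, h3]

lemma hden_prod (x : Fin N → ℝ) :
    |x 0| ^ (p - 2) * Real.exp (-∑ k, x k ^ 2) = ∏ k, hden p k (x k) := by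
  unfold hden
  rw [Finset.prod_mul_distrib]
  have h1 : (∏ k, |x k| ^ (if k = 0 then p - 2 else 0)) = |x 0| ^ (p - 2) := by
    rw [Finset.prod_eq_single 0 (fun k _ hk => by rw [if_neg hk, Real.rpow_zero])
      (fun hc => absurd (Finset.mem_univ _) hc), if_pos rfl]
  have h3 : (∏ k, Real.exp (-x k ^ 2)) = Real.exp (-∑ k, x k ^ 2) := by
    rw [← Real.exp_sum]
    congr 1
    rw [← Finset.sum_neg_distrib]
  rw [h1, h3]

/-- helper products -/
lemma prod_univ_two_distinct (v : Fin N → ℝ) (g : ℝ) (i : Fin N) (hi : i ≠ 0)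
    (hv : ∀ k, k ≠ 0 → k ≠ i → v k = g) :
    ∏ k, v k = v 0 * (v i * g ^ (N - 2)) := by
  rw [← Finset.mul_prod_erase Finset.univ v (Finset.mem_univ 0),
    ← Finset.mul_prod_erase (Finset.univ.erase 0) v
      (Finset.mem_erase.2 ⟨hi, Finset.mem_univ i⟩),
    Finset.prod_congr rfl (fun k hk => hv k
      (Finset.ne_of_mem_erase (Finset.mem_of_mem_erase hk)) (Finset.ne_of_mem_erase hk)),
    Finset.prod_const, Finset.card_erase_of_mem (Finset.mem_erase.2 ⟨hi, Finset.mem_univ i⟩),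
    Finset.card_erase_of_mem (Finset.mem_univ 0), Finset.card_univ, Fintype.card_fin,
    Nat.sub_sub]

lemma prod_univ_one_distinct (v : Fin N → ℝ) (g : ℝ)
    (hv : ∀ k, k ≠ 0 → v k = g) :
    ∏ k, v k = v 0 * g ^ (N - 1) := by
  rw [← Finset.mul_prod_erase Finset.univ v (Finset.mem_univ 0),
    Finset.prod_congr rfl (fun k hk => hv k (Finset.ne_of_mem_erase hk)),
    Finset.prod_const, Finset.card_erase_of_mem (Finset.mem_univ 0), Finset.card_univ,
    Fintype.card_fin]

/-- the second-moment integrals -/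
lemma KK_eq_prod (hp : 1 < p) (i j : Fin N) :
    ∫ x : Fin N → ℝ, |x 0| ^ (p - 2) * (x i * x j) * Real.exp (-∑ k, x k ^ 2)
      = ∏ k, ∫ t, hfac p i j k t := by
  rw [integral_congr_ae (Filter.Eventually.of_forall (hfac_prod i j)),
    MeasureTheory.integral_fintype_prod_volume_eq_prod (hfac p i j)]

lemma KK_integrable (hp : 1 < p) (i j : Fin N) :
    Integrable (fun x : Fin N → ℝ =>
      |x 0| ^ (p - 2) * (x i * x j) * Real.exp (-∑ k, x k ^ 2)) := by
  have := MeasureTheory.Integrable.fintype_prod (f := hfac p i j)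
    (fun k => hfac_integrable hp i j k)
  exact this.congr (Filter.Eventually.of_forall (fun x => (hfac_prod i j x).symm))

lemma KK_off (hp : 1 < p) (i j : Fin N) (hij : i ≠ j) :
    ∫ x : Fin N → ℝ, |x 0| ^ (p - 2) * (x i * x j) * Real.exp (-∑ k, x k ^ 2) = 0 := by
  rw [KK_eq_prod hp i j]
  set l : Fin N := if i = 0 then j else i with hl
  have hexp : (if l = i then 1 else 0) + (if l = j then 1 else 0) = (1:ℕ) := by
    by_cases h0 : i = 0
    · rw [hl, if_pos h0, if_neg (fun hc => hij hc.symm), if_pos rfl]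
    · rw [hl, if_neg h0, if_pos rfl, if_neg hij]
  have hl0 : l ≠ 0 := by
    by_cases h0 : i = 0
    · rw [hl, if_pos h0]; exact fun hc => hij (by rw [h0, hc])
    · rw [hl, if_neg h0]; exact h0
  refine Finset.prod_eq_zero (Finset.mem_univ l) ?_
  unfold hfac
  rw [hexp]
  simp only [if_neg hl0]
  have := moment_odd (0:ℝ)
  simpa using this

lemma KK_diag (hp : 1 < p) (i : Fin N) (hi : i ≠ 0) :
    ∫ x : Fin N → ℝ, |x 0| ^ (p - 2) * (x i * x i) * Real.exp (-∑ k, x k ^ 2)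
      = Real.Gamma ((p - 1) / 2) * (Real.Gamma (3 / 2) * Real.Gamma (1/2) ^ (N - 2)) := by
  rw [KK_eq_prod hp i i,
    prod_univ_two_distinct (fun k => ∫ t, hfac p i i k t) (Real.Gamma (1/2)) i hi (fun k hk0 hki => by
      unfold hfac
      simp only [if_neg hk0, if_neg hki]
      simpa using moment_eq (s := 0) (by norm_num))]
  congr 1
  · unfold hfac
    simp only [if_pos rfl, if_neg (Ne.symm hi)]
    have := moment_eq (s := p - 2) (by linarith)
    rw [show p - 2 + 1 = p - 1 by ring] at this
    simpa using this
  · congr 1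
    unfold hfac
    simp only [if_neg hi, if_pos rfl]
    have := moment_sq (s := 0) (by norm_num)
    rw [show (0:ℝ) + 3 = 3 by ring] at this
    simpa using this

lemma KK_00 (hp : 1 < p) :
    ∫ x : Fin N → ℝ, |x 0| ^ (p - 2) * (x 0 * x 0) * Real.exp (-∑ k, x k ^ 2)
      = Real.Gamma ((p + 1) / 2) * Real.Gamma (1/2) ^ (N - 1) := by
  rw [KK_eq_prod hp 0 0,
    prod_univ_one_distinct (fun k => ∫ t, hfac p 0 0 k t) (Real.Gamma (1/2)) (fun k hk0 => by
      unfold hfac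
      simp only [if_neg hk0]
      simpa using moment_eq (s := 0) (by norm_num))]
  congr 1
  unfold hfac
  simp only [if_pos rfl]
  have := moment_sq (s := p - 2) (by linarith)
  rw [show p - 2 + 3 = p + 1 by ring] at this
  simpa using this

lemma LL_eq (hp : 1 < p) :
    ∫ x : Fin N → ℝ, |x 0| ^ (p - 2) * Real.exp (-∑ k, x k ^ 2)
      = Real.Gamma ((p - 1) / 2) * Real.Gamma (1/2) ^ (N - 1) := by
  rw [integral_congr_ae (Filter.Eventually.of_forall (hden_prod (p := p))),
    MeasureTheory.integral_fintype_prod_volume_eq_prod (hden p),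
    prod_univ_one_distinct (fun k => ∫ t, hden p k t) (Real.Gamma (1/2)) (fun k hk0 => by
      unfold hden
      simp only [if_neg hk0]
      simpa using moment_eq (s := 0) (by norm_num))]
  congr 1
  unfold hden
  simp only [if_pos rfl]
  have := moment_eq (s := p - 2) (by linarith)
  rw [show p - 2 + 1 = p - 1 by ring] at this
  simpa using this

lemma LL_integrable (hp : 1 < p) :
    Integrable (fun x : Fin N → ℝ => |x 0| ^ (p - 2) * Real.exp (-∑ k, x k ^ 2)) := by
  have := MeasureTheory.Integrable.fintype_prod (f := hden p (N := N)) (fun k => hden_integrable hp k)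
  exact this.congr (Filter.Eventually.of_forall (fun x => (hden_prod x).symm))

end PiSide

open scoped RealInnerProductSpace

set_option maxHeartbeats 1000000



open MeasureTheory
open scoped RealInnerProductSpace

/-- For `N ≥ 2`, `ξ ∈ ℝ^N \ {0}`, `A` an `N×N` real symmetric matrix,
and `1 < p < ∞`:
`∫_{𝕊^{N−1}} |ξ·y|^{p−2} ⟨Ay, y⟩ dS_y / ∫_{𝕊^{N−1}} |ξ·y|^{p−2} dS_y
  = (tr A + (p−2) ⟨Aξ,ξ⟩/|ξ|²) / (N+p−2)`.
The surface measure on the unit sphere is realised as `volume.toSphere` (the ratio of the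
two integrals does not depend on the normalization of the surface measure). -/
theorem sphere_integral_ratio
    {N : ℕ} (hN : 2 ≤ N) (p : ℝ) (hp : 1 < p)
    (ξ : EuclideanSpace ℝ (Fin N)) (hξ : ξ ≠ 0)
    (A : Matrix (Fin N) (Fin N) ℝ) (hA : A.IsSymm) :
    (∫ y : Metric.sphere (0 : EuclideanSpace ℝ (Fin N)) 1,
        |⟪ξ, (y : EuclideanSpace ℝ (Fin N))⟫| ^ (p - 2) *
          ⟪Matrix.toEuclideanLin A (y : EuclideanSpace ℝ (Fin N)),
            (y : EuclideanSpace ℝ (Fin N))⟫ ∂(volume.toSphere)) /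
      (∫ y : Metric.sphere (0 : EuclideanSpace ℝ (Fin N)) 1,
        |⟪ξ, (y : EuclideanSpace ℝ (Fin N))⟫| ^ (p - 2) ∂(volume.toSphere)) =
    (A.trace + (p - 2) * ⟪Matrix.toEuclideanLin A ξ, ξ⟫ / ‖ξ‖ ^ 2) / (N + p - 2) := by
  haveI : NeZero N := ⟨by omega⟩
  have hξn : (0:ℝ) < ‖ξ‖ := norm_pos_iff.2 hξ
  set T : EuclideanSpace ℝ (Fin N) →ₗ[ℝ] EuclideanSpace ℝ (Fin N) := Matrix.toEuclideanLin A
    with hT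
  set u : EuclideanSpace ℝ (Fin N) := ‖ξ‖⁻¹ • ξ with hu
  have hu1 : ‖u‖ = 1 := norm_smul_inv_norm (𝕜 := ℝ) hξ
  set e₀ : EuclideanSpace ℝ (Fin N) := EuclideanSpace.single 0 1 with he₀
  have he₀n : ‖e₀‖ = 1 := by simp [he₀, EuclideanSpace.norm_single]
  set O := (Submodule.reflection (ℝ ∙ (e₀ - u))ᗮ) with hO
  have hOe : O e₀ = u := Submodule.reflection_sub (by rw [he₀n, hu1])
  have hOmp : MeasurePreserving O volume volume := O.measurePreserving
  set Blin : EuclideanSpace ℝ (Fin N) →ₗ[ℝ] EuclideanSpace ℝ (Fin N) :=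
    O.symm.toLinearMap ∘ₗ T ∘ₗ O.toLinearMap with hBlin
  set bas := PiLp.basisFun 2 ℝ (Fin N) with hbas
  set C := LinearMap.toMatrix bas bas Blin with hC
  -- basic coordinate facts
  have hBC : Matrix.toEuclideanLin C = Blin := by
    rw [hC, Matrix.toEuclideanLin_eq_toLin]
    exact Matrix.toLin_toMatrix _ _ _
  have hcoord : ∀ (z : EuclideanSpace ℝ (Fin N)) (i : Fin N), Blin z i = ∑ j, C i j * z j := by
    intro z i
    rw [← hBC]
    simp [Matrix.toEuclideanLin_apply, Matrix.mulVec, dotProduct]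
  have hinner : ∀ z : EuclideanSpace ℝ (Fin N),
      ⟪Blin z, z⟫ = ∑ i, ∑ j, C i j * (z i * z j) := by
    intro z
    rw [PiLp.inner_apply]
    simp only [RCLike.inner_apply, conj_trivial]
    rw [Finset.sum_congr rfl (fun i _ => by rw [hcoord z i, Finset.mul_sum])]
    exact Finset.sum_congr rfl (fun i _ => Finset.sum_congr rfl (fun j _ => by ring))
  -- trace
  have htrT : LinearMap.trace ℝ _ T = A.trace := by
    rw [hT, Matrix.toEuclideanLin_eq_toLin, LinearMap.trace_eq_matrix_trace ℝ bas,
      LinearMap.toMatrix_toLin]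
  have hconj : Blin = LinearEquiv.conj O.symm.toLinearEquiv T := by
    ext x
    simp [hBlin, LinearEquiv.conj_apply]
  have htrB : LinearMap.trace ℝ _ Blin = LinearMap.trace ℝ _ T := by
    rw [hconj, LinearMap.trace_conj']
  have htrace : C.trace = A.trace := by
    rw [hC, ← LinearMap.trace_eq_matrix_trace ℝ bas Blin, htrB, htrT]
  -- the distinguished entry
  have hC00 : C 0 0 = ⟪T ξ, ξ⟫ / ‖ξ‖ ^ 2 := by
    have h1 : C 0 0 = Blin e₀ 0 := by
      rw [hC, LinearMap.toMatrix_apply, PiLp.basisFun_repr, PiLp.basisFun_apply]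
    have h2 : Blin e₀ 0 = ⟪e₀, Blin e₀⟫ := by
      rw [he₀, EuclideanSpace.inner_single_left]
      simp
    have h3 : Blin e₀ = O.symm (T u) := by
      rw [hBlin]
      simp [hOe]
    have h4 : ⟪e₀, O.symm (T u)⟫ = ⟪u, T u⟫ := by
      rw [← O.inner_map_map e₀ (O.symm (T u)), O.apply_symm_apply, hOe]
    have h5 : ⟪u, T u⟫ = ⟪T ξ, ξ⟫ / ‖ξ‖ ^ 2 := by
      rw [hu, LinearMap.map_smul, real_inner_smul_left, real_inner_smul_right, real_inner_comm,
        eq_div_iff (by positivity : (‖ξ‖:ℝ) ^ 2 ≠ 0), pow_two,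
        show ∀ v : ℝ, ‖ξ‖⁻¹ * (‖ξ‖⁻¹ * v) * (‖ξ‖ * ‖ξ‖) = (‖ξ‖⁻¹ * ‖ξ‖) * ((‖ξ‖⁻¹ * ‖ξ‖) * v)
          from fun v => by ring, inv_mul_cancel₀ hξn.ne']
      ring
    rw [h1, h2, h3, h4, h5]
  -- pointwise rotation facts
  have hweight : ∀ x : EuclideanSpace ℝ (Fin N), ⟪ξ, O x⟫ = ‖ξ‖ * x 0 := by
    intro x
    have hξu : ξ = ‖ξ‖ • u := by rw [hu, smul_smul, mul_inv_cancel₀ hξn.ne', one_smul]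
    conv_lhs => rw [hξu]
    rw [real_inner_smul_left, ← hOe, O.inner_map_map, he₀, EuclideanSpace.inner_single_left]
    simp
  have hTO : ∀ x, ⟪T (O x), O x⟫ = ⟪Blin x, x⟫ := by
    intro x
    have hb : Blin x = O.symm (T (O x)) := rfl
    rw [hb, ← O.inner_map_map (O.symm (T (O x))) x, O.apply_symm_apply]
  have hnormsq : ∀ z : EuclideanSpace ℝ (Fin N), ‖z‖ ^ 2 = ∑ k, z k ^ 2 := by
    intro z
    rw [EuclideanSpace.norm_eq, Real.sq_sqrt (Finset.sum_nonneg fun k _ => sq_nonneg _)]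
    simp [Real.norm_eq_abs, sq_abs]
  set me := (MeasurableEquiv.toLp 2 (Fin N → ℝ)).symm with hme
  have hmp : MeasurePreserving (⇑me.symm) volume volume :=
    (EuclideanSpace.volume_preserving_symm_measurableEquiv_toLp (Fin N)).symm
  -- full-space denominator integral
  have hIDen : ∫ x : EuclideanSpace ℝ (Fin N), |⟪ξ, x⟫| ^ (p - 2) * Real.exp (-‖x‖ ^ 2)
      = ‖ξ‖ ^ (p - 2) * (Real.Gamma ((p-1)/2) * Real.Gamma (1/2) ^ (N - 1)) := by
    rw [← hOmp.integral_comp O.toHomeomorph.measurableEmbedding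
      (fun x => |⟪ξ, x⟫| ^ (p - 2) * Real.exp (-‖x‖ ^ 2))]
    have hpt : ∀ x : EuclideanSpace ℝ (Fin N),
        |⟪ξ, O x⟫| ^ (p - 2) * Real.exp (-‖O x‖ ^ 2)
        = ‖ξ‖ ^ (p - 2) * (|x 0| ^ (p - 2) * Real.exp (-‖x‖ ^ 2)) := by
      intro x
      rw [hweight x, O.norm_map, abs_mul, abs_of_nonneg (norm_nonneg ξ),
        Real.mul_rpow (norm_nonneg ξ) (abs_nonneg _)]
      ring
    rw [integral_congr_ae (Filter.Eventually.of_forall hpt), integral_const_mul]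
    congr 1
    rw [← hmp.integral_comp me.symm.measurableEmbedding
      (fun z : EuclideanSpace ℝ (Fin N) => |z 0| ^ (p - 2) * Real.exp (-‖z‖ ^ 2))]
    have hpt2 : ∀ x : Fin N → ℝ,
        |(me.symm x) 0| ^ (p - 2) * Real.exp (-‖me.symm x‖ ^ 2)
        = |x 0| ^ (p - 2) * Real.exp (-∑ k, x k ^ 2) := by
      intro x
      rw [hnormsq (me.symm x)]
      rfl
    rw [integral_congr_ae (Filter.Eventually.of_forall hpt2), LL_eq hp]
  -- full-space numerator integral
  have hINum : ∫ x : EuclideanSpace ℝ (Fin N),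
      |⟪ξ, x⟫| ^ (p - 2) * ⟪T x, x⟫ * Real.exp (-‖x‖ ^ 2)
      = ‖ξ‖ ^ (p - 2) * (C 0 0 * (Real.Gamma ((p+1)/2) * Real.Gamma (1/2) ^ (N-1))
          + (A.trace - C 0 0) *
            (Real.Gamma ((p-1)/2) * (Real.Gamma (3/2) * Real.Gamma (1/2) ^ (N-2)))) := by
    rw [← hOmp.integral_comp O.toHomeomorph.measurableEmbedding
      (fun x => |⟪ξ, x⟫| ^ (p - 2) * ⟪T x, x⟫ * Real.exp (-‖x‖ ^ 2))]
    have hpt : ∀ x : EuclideanSpace ℝ (Fin N),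
        |⟪ξ, O x⟫| ^ (p - 2) * ⟪T (O x), O x⟫ * Real.exp (-‖O x‖ ^ 2)
        = ‖ξ‖ ^ (p - 2) * (|x 0| ^ (p - 2) * (∑ i, ∑ j, C i j * (x i * x j)) *
            Real.exp (-‖x‖ ^ 2)) := by
      intro x
      rw [hweight x, hTO x, hinner x, O.norm_map, abs_mul, abs_of_nonneg (norm_nonneg ξ),
        Real.mul_rpow (norm_nonneg ξ) (abs_nonneg _)]
      ring
    rw [integral_congr_ae (Filter.Eventually.of_forall hpt), integral_const_mul]
    congr 1
    rw [← hmp.integral_comp me.symm.measurableEmbedding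
      (fun z : EuclideanSpace ℝ (Fin N) => |z 0| ^ (p - 2) *
        (∑ i, ∑ j, C i j * (z i * z j)) * Real.exp (-‖z‖ ^ 2))]
    have hpt2 : ∀ x : Fin N → ℝ,
        |(me.symm x) 0| ^ (p - 2) * (∑ i, ∑ j, C i j * ((me.symm x) i * (me.symm x) j)) *
          Real.exp (-‖me.symm x‖ ^ 2)
        = ∑ i, ∑ j, C i j * (|x 0| ^ (p - 2) * (x i * x j) *
            Real.exp (-∑ k, x k ^ 2)) := by
      intro x
      rw [hnormsq (me.symm x)]
      show |x 0| ^ (p - 2) * (∑ i, ∑ j, C i j * (x i * x j)) * Real.exp (-∑ k, x k ^ 2) = _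
      rw [Finset.mul_sum, Finset.sum_mul]
      refine Finset.sum_congr rfl fun i _ => ?_
      rw [Finset.mul_sum, Finset.sum_mul]
      refine Finset.sum_congr rfl fun j _ => ?_
      ring
    rw [integral_congr_ae (Filter.Eventually.of_forall hpt2)]
    rw [integral_finset_sum _ (fun i _ => integrable_finset_sum _ (fun j _ =>
      (KK_integrable hp i j).const_mul (C i j)))]
    rw [Finset.sum_congr rfl (fun i _ => integral_finset_sum _ (fun j _ =>
      (KK_integrable hp i j).const_mul (C i j)))]
    rw [Finset.sum_congr rfl (fun i _ => Finset.sum_congr rfl (fun j _ =>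
      integral_const_mul (C i j) _))]
    rw [Finset.sum_congr rfl (fun i _ => Finset.sum_eq_single i
      (fun j _ hji => by rw [KK_off hp i j (fun hc => hji hc.symm), mul_zero])
      (fun hni => absurd (Finset.mem_univ i) hni))]
    rw [← Finset.add_sum_erase Finset.univ _ (Finset.mem_univ 0)]
    rw [KK_00 hp]
    rw [Finset.sum_congr rfl (fun i hi => by
      rw [KK_diag hp i (Finset.ne_of_mem_erase hi)])]
    rw [← Finset.sum_mul]
    have ht : ∑ i, C i i = A.trace := by
      rw [← htrace]
      simp [Matrix.trace, Matrix.diag]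
    have hsplit := Finset.add_sum_erase Finset.univ (fun i => C i i) (Finset.mem_univ 0)
    have hsum0 : ∑ i ∈ Finset.univ.erase 0, C i i = A.trace - C 0 0 := by
      rw [← ht, ← hsplit]
      ring
    rw [hsum0]
  -- polar decomposition of the two integrals
  have hpolNum : ∫ x : EuclideanSpace ℝ (Fin N),
      |⟪ξ, x⟫| ^ (p - 2) * ⟪T x, x⟫ * Real.exp (-‖x‖ ^ 2)
      = (∫ r in Ioi (0:ℝ), r ^ (N-1) * (r ^ p * Real.exp (-r ^ 2))) *
        ∫ y : Metric.sphere (0 : EuclideanSpace ℝ (Fin N)) 1,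
          |⟪ξ, (y : EuclideanSpace ℝ (Fin N))⟫| ^ (p - 2) *
            ⟪T (y : EuclideanSpace ℝ (Fin N)), (y : EuclideanSpace ℝ (Fin N))⟫
          ∂(volume.toSphere) := by
    refine polar_eq _ _ _ ?_
    intro y r hr
    have hy : ‖(y : EuclideanSpace ℝ (Fin N))‖ = 1 := by
      have := y.2
      rwa [mem_sphere_zero_iff_norm] at this
    have h2 : (r:ℝ) ^ p = r ^ (p - 2) * r ^ (2:ℕ) := by
      rw [← Real.rpow_natCast r 2, ← Real.rpow_add hr]
      norm_num
    rw [real_inner_smul_right, abs_mul, abs_of_pos hr,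
      Real.mul_rpow hr.le (abs_nonneg _), LinearMap.map_smul, real_inner_smul_left,
      real_inner_smul_right, norm_smul, hy, mul_one, Real.norm_eq_abs, abs_of_pos hr, h2]
    ring
  have hpolDen : ∫ x : EuclideanSpace ℝ (Fin N),
      |⟪ξ, x⟫| ^ (p - 2) * Real.exp (-‖x‖ ^ 2)
      = (∫ r in Ioi (0:ℝ), r ^ (N-1) * (r ^ (p-2) * Real.exp (-r ^ 2))) *
        ∫ y : Metric.sphere (0 : EuclideanSpace ℝ (Fin N)) 1,
          |⟪ξ, (y : EuclideanSpace ℝ (Fin N))⟫| ^ (p - 2) ∂(volume.toSphere) := by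
    refine polar_eq _ _ _ ?_
    intro y r hr
    have hy : ‖(y : EuclideanSpace ℝ (Fin N))‖ = 1 := by
      have := y.2
      rwa [mem_sphere_zero_iff_norm] at this
    rw [real_inner_smul_right, abs_mul, abs_of_pos hr,
      Real.mul_rpow hr.le (abs_nonneg _), norm_smul, hy, mul_one, Real.norm_eq_abs,
      abs_of_pos hr]
    ring
  -- radial integrals
  have hcast : ((N - 1 : ℕ) : ℝ) = (N:ℝ) - 1 := by
    rw [Nat.cast_sub (by omega)]
    norm_num
  have hNR : (2:ℝ) ≤ (N:ℝ) := by exact_mod_cast hN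
  have hc1 : ∫ r in Ioi (0:ℝ), r ^ (N-1) * (r ^ p * Real.exp (-r ^ 2))
      = (1/2) * Real.Gamma (((N:ℝ) + p)/2) := by
    rw [radial_eq (N-1) (q := p) (by rw [hcast]; linarith)]
    rw [hcast]
    norm_num
    ring_nf
  have hc2 : ∫ r in Ioi (0:ℝ), r ^ (N-1) * (r ^ (p-2) * Real.exp (-r ^ 2))
      = (1/2) * Real.Gamma (((N:ℝ) + p - 2)/2) := by
    rw [radial_eq (N-1) (q := p-2) (by rw [hcast]; linarith)]
    rw [hcast]
    norm_num
    ring_nf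
  -- Gamma facts
  have hgpos : 0 < Real.Gamma (1/2) := Real.Gamma_pos_of_pos (by norm_num)
  have hapos : 0 < Real.Gamma ((p-1)/2) := Real.Gamma_pos_of_pos (by linarith)
  have hc2pos : 0 < Real.Gamma (((N:ℝ)+p-2)/2) := Real.Gamma_pos_of_pos (by linarith)
  have hNp : (0:ℝ) < (N:ℝ) + p - 2 := by linarith
  have hΓ1 : Real.Gamma ((p+1)/2) = (p-1)/2 * Real.Gamma ((p-1)/2) := by
    rw [show (p+1)/2 = (p-1)/2 + 1 by ring, Real.Gamma_add_one (ne_of_gt (by linarith))]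
  have hΓ2 : Real.Gamma ((3:ℝ)/2) = 1/2 * Real.Gamma (1/2) := by
    rw [show (3:ℝ)/2 = (1:ℝ)/2 + 1 by norm_num, Real.Gamma_add_one (by norm_num)]
  have hΓ3 : Real.Gamma (((N:ℝ)+p)/2) = ((N:ℝ)+p-2)/2 * Real.Gamma (((N:ℝ)+p-2)/2) := by
    rw [show ((N:ℝ)+p)/2 = ((N:ℝ)+p-2)/2 + 1 by ring, Real.Gamma_add_one (ne_of_gt (by linarith))]
  have hpow : Real.Gamma (1/2) ^ (N-1) = Real.Gamma (1/2) ^ (N-2) * Real.Gamma (1/2) := by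
    rw [show N - 1 = (N-2) + 1 by omega, pow_succ]
  have hW : (0:ℝ) < ‖ξ‖ ^ (p-2) := Real.rpow_pos_of_pos hξn _
  -- combine
  have hNum2 : (1/2) * Real.Gamma (((N:ℝ) + p)/2) *
      (∫ y : Metric.sphere (0 : EuclideanSpace ℝ (Fin N)) 1,
        |⟪ξ, (y : EuclideanSpace ℝ (Fin N))⟫| ^ (p - 2) *
          ⟪T (y : EuclideanSpace ℝ (Fin N)), (y : EuclideanSpace ℝ (Fin N))⟫
        ∂(volume.toSphere))
      = ‖ξ‖ ^ (p - 2) * (C 0 0 * (Real.Gamma ((p+1)/2) * Real.Gamma (1/2) ^ (N-1))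
          + (A.trace - C 0 0) *
            (Real.Gamma ((p-1)/2) * (Real.Gamma (3/2) * Real.Gamma (1/2) ^ (N-2)))) := by
    rw [← hc1, ← hpolNum, hINum]
  have hDen2 : (1/2) * Real.Gamma (((N:ℝ) + p - 2)/2) *
      (∫ y : Metric.sphere (0 : EuclideanSpace ℝ (Fin N)) 1,
        |⟪ξ, (y : EuclideanSpace ℝ (Fin N))⟫| ^ (p - 2) ∂(volume.toSphere))
      = ‖ξ‖ ^ (p - 2) * (Real.Gamma ((p-1)/2) * Real.Gamma (1/2) ^ (N - 1)) := by
    rw [← hc2, ← hpolDen, hIDen]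
  have hDenpos : 0 < ∫ y : Metric.sphere (0 : EuclideanSpace ℝ (Fin N)) 1,
      |⟪ξ, (y : EuclideanSpace ℝ (Fin N))⟫| ^ (p - 2) ∂(volume.toSphere) := by
    have hY : (0:ℝ) < ‖ξ‖ ^ (p - 2) * (Real.Gamma ((p-1)/2) * Real.Gamma (1/2) ^ (N - 1)) :=
      mul_pos hW (mul_pos hapos (pow_pos hgpos _))
    nlinarith [hDen2, mul_pos (mul_pos (by norm_num : (0:ℝ) < 1/2) hc2pos) hY]
  have hRHS : (p - 2) * ⟪T ξ, ξ⟫ / ‖ξ‖ ^ 2 = (p-2) * C 0 0 := by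
    rw [hC00]
    ring
  rw [hRHS, div_eq_div_iff (ne_of_gt hDenpos) (ne_of_gt hNp)]
  -- final algebra
  have e1 := hNum2
  have e2 := hDen2
  rw [hΓ1, hΓ2, hΓ3, hpow] at e1
  rw [hpow] at e2
  set nv := (∫ y : Metric.sphere (0 : EuclideanSpace ℝ (Fin N)) 1,
    |⟪ξ, (y : EuclideanSpace ℝ (Fin N))⟫| ^ (p - 2) *
      ⟪T (y : EuclideanSpace ℝ (Fin N)), (y : EuclideanSpace ℝ (Fin N))⟫
    ∂(volume.toSphere)) with hnv
  set dv := (∫ y : Metric.sphere (0 : EuclideanSpace ℝ (Fin N)) 1,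
    |⟪ξ, (y : EuclideanSpace ℝ (Fin N))⟫| ^ (p - 2) ∂(volume.toSphere)) with hdv
  have hcan : ((1/2) * (((N:ℝ)+p-2)/2 * Real.Gamma (((N:ℝ)+p-2)/2))) *
      ((1/2) * Real.Gamma (((N:ℝ)+p-2)/2)) ≠ 0 := by positivity
  refine mul_left_cancel₀ hcan ?_
  calc ((1/2) * (((N:ℝ)+p-2)/2 * Real.Gamma (((N:ℝ)+p-2)/2))) *
        ((1/2) * Real.Gamma (((N:ℝ)+p-2)/2)) * (nv * ((N:ℝ) + p - 2))
      = ((1/2) * Real.Gamma (((N:ℝ)+p-2)/2)) * ((N:ℝ) + p - 2) *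
        ((1/2) * (((N:ℝ)+p-2)/2 * Real.Gamma (((N:ℝ)+p-2)/2)) * nv) := by ring
    _ = ((1/2) * Real.Gamma (((N:ℝ)+p-2)/2)) * ((N:ℝ) + p - 2) *
        (‖ξ‖ ^ (p - 2) * (C 0 0 * ((p-1)/2 * Real.Gamma ((p-1)/2) *
            (Real.Gamma (1/2) ^ (N-2) * Real.Gamma (1/2)))
          + (A.trace - C 0 0) * (Real.Gamma ((p-1)/2) *
            (1/2 * Real.Gamma (1/2) * Real.Gamma (1/2) ^ (N-2))))) := by rw [e1]
    _ = (A.trace + (p - 2) * C 0 0) * (((1/2) * (((N:ℝ)+p-2)/2 *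
          Real.Gamma (((N:ℝ)+p-2)/2)))) *
        ((1/2) * Real.Gamma (((N:ℝ)+p-2)/2) * dv) := by
        rw [e2]
        ring
    _ = ((1/2) * (((N:ℝ)+p-2)/2 * Real.Gamma (((N:ℝ)+p-2)/2))) *
        ((1/2) * Real.Gamma (((N:ℝ)+p-2)/2)) * ((A.trace + (p - 2) * C 0 0) * dv) := by ring
end

section
/- Let N ≥ 1 and let α > 0 and β < α + 1 be real numbers. Define E_* = { (r,σ) ∈ ℝ² : 0 < σ < 1/(4π), 0 < r < √(−2Nσ log(4πσ)) }. Then ∫_{E_*} r^{2α−1} σ^{−β} dr dσ = 2^{2β−α−3} π^{β−α−1} N^α Γ(α+1) / ( α (α−β+1)^{α+1} ), where Γ is the Gamma function. -/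
open MeasureTheory

namespace HeatBallAux

open Real Set

noncomputable def φ : ℝ → ℝ := fun t => Real.exp (-t) / (4 * Real.pi)

lemma phi_image : φ '' (Ioi 0) = Ioo 0 (1 / (4 * Real.pi)) := by
  have hπ : (0:ℝ) < 4 * Real.pi := by positivity
  ext x
  simp only [mem_image, mem_Ioi, mem_Ioo, φ]
  constructor
  · rintro ⟨t, ht, rfl⟩
    constructor
    · positivity
    · rw [div_lt_div_iff₀ hπ hπ]
      have : Real.exp (-t) < 1 := Real.exp_lt_one_iff.2 (by linarith)
      nlinarith
  · rintro ⟨hx0, hx1⟩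
    have hlt : 4 * Real.pi * x < 1 := by
      rw [lt_div_iff₀ hπ] at hx1; nlinarith
    refine ⟨-Real.log (4 * Real.pi * x), ?_, ?_⟩
    · have := Real.log_neg (by positivity) hlt
      linarith
    · rw [neg_neg, Real.exp_log (by positivity)]
      field_simp

lemma phi_inj : InjOn φ (Ioi 0) := by
  intro a _ b _ h
  simp only [φ, div_left_inj' (by positivity : (4 * Real.pi) ≠ 0), Real.exp_eq_exp, neg_inj] at h
  exact h

lemma phi_deriv :
    ∀ t ∈ Ioi (0:ℝ), HasDerivWithinAt φ (-(Real.exp (-t) / (4 * Real.pi))) (Ioi 0) t := by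
  intro t _
  have : HasDerivAt φ (-(Real.exp (-t)) / (4 * Real.pi)) t := by
    show HasDerivAt (fun t => Real.exp (-t) / (4 * Real.pi)) _ t
    simpa using ((Real.hasDerivAt_exp (-t)).comp t (hasDerivAt_neg t)).div_const (4 * Real.pi)
  simpa [neg_div] using this.hasDerivWithinAt

lemma subst_eq (g : ℝ → ℝ) :
    ∫ σ in Ioo 0 (1 / (4 * Real.pi)), g σ
      = ∫ t in Ioi 0, (Real.exp (-t) / (4 * Real.pi)) * g (Real.exp (-t) / (4 * Real.pi)) := by
  rw [← phi_image, integral_image_eq_integral_abs_deriv_smul measurableSet_Ioi phi_deriv phi_inj]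
  refine setIntegral_congr_fun measurableSet_Ioi fun t _ => ?_
  have h : (0:ℝ) < Real.exp (-t) / (4 * Real.pi) := by positivity
  simp [φ, abs_of_pos h, smul_eq_mul]

lemma subst_intble (g : ℝ → ℝ) :
    IntegrableOn g (Ioo 0 (1 / (4 * Real.pi)))
      ↔ IntegrableOn
          (fun t => (Real.exp (-t) / (4 * Real.pi)) * g (Real.exp (-t) / (4 * Real.pi)))
          (Ioi 0) := by
  rw [← phi_image, integrableOn_image_iff_integrableOn_abs_deriv_smul measurableSet_Ioi
    phi_deriv phi_inj]
  refine integrableOn_congr_fun (fun t _ => ?_) measurableSet_Ioi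
  have h : (0:ℝ) < Real.exp (-t) / (4 * Real.pi) := by positivity
  simp [φ, abs_of_pos h, smul_eq_mul]

lemma gamma_eq (γ δ : ℝ) (hγ : 0 < γ) (hδ : 0 < δ) :
    ∫ t in Ioi (0:ℝ), t ^ γ * Real.exp (-(δ * t)) = (1/δ) ^ (γ+1) * Real.Gamma (γ+1) := by
  have := Real.integral_rpow_mul_exp_neg_mul_Ioi (a := γ + 1) (r := δ) (by linarith) hδ
  simpa using this

lemma gamma_intble (γ δ : ℝ) (hγ : 0 < γ) (hδ : 0 < δ) :
    IntegrableOn (fun t : ℝ => t ^ γ * Real.exp (-(δ * t))) (Ioi 0) := by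
  have := integrableOn_rpow_mul_exp_neg_mul_rpow (s := γ) (p := 1) (b := δ) (by linarith) zero_lt_one hδ
  simpa [Real.rpow_one, neg_mul] using this

lemma comp_eq (γ δ : ℝ) (t : ℝ) (ht : t ∈ Ioi (0:ℝ)) :
    (Real.exp (-t) / (4 * Real.pi)) * ((Real.exp (-t) / (4 * Real.pi)) ^ (δ - 1)
        * (-Real.log (4 * Real.pi * (Real.exp (-t) / (4 * Real.pi)))) ^ γ)
      = (4 * Real.pi) ^ (-δ) * (t ^ γ * Real.exp (-(δ * t))) := by
  have hπ : (0:ℝ) < 4 * Real.pi := by positivity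
  have hlog : 4 * Real.pi * (Real.exp (-t) / (4 * Real.pi)) = Real.exp (-t) := by
    field_simp
  rw [hlog, Real.log_exp, neg_neg]
  rw [Real.div_rpow (Real.exp_pos _).le hπ.le, ← Real.exp_mul]
  have h1 : Real.exp (-t) * Real.exp (-t * (δ - 1)) = Real.exp (-(δ * t)) := by
    rw [← Real.exp_add]; ring_nf
  have h2 : (4 * Real.pi) ^ (δ - 1) * (4 * Real.pi) = (4 * Real.pi) ^ δ := by
    rw [← Real.rpow_add_one hπ.ne']; ring_nf
  have h3 : (0:ℝ) < (4 * Real.pi) ^ (δ - 1) := Real.rpow_pos_of_pos hπ _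
  rw [Real.rpow_neg hπ.le]
  field_simp
  rw [← Real.exp_add, show -t + -(t * (δ - 1)) = -(t * δ) by ring,
    mul_comm (4 * Real.pi) ((4 * Real.pi) ^ (δ - 1)), h2]
  ring

lemma keyB (γ δ : ℝ) (hγ : 0 < γ) (hδ : 0 < δ) :
    IntegrableOn (fun σ : ℝ => σ ^ (δ - 1) * (-Real.log (4 * Real.pi * σ)) ^ γ)
      (Ioo 0 (1 / (4 * Real.pi))) ∧
    ∫ σ in Ioo 0 (1 / (4 * Real.pi)), σ ^ (δ - 1) * (-Real.log (4 * Real.pi * σ)) ^ γ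
      = (4 * Real.pi) ^ (-δ) * ((1/δ) ^ (γ+1) * Real.Gamma (γ+1)) := by
  constructor
  · rw [subst_intble]
    exact (integrableOn_congr_fun (fun t ht => comp_eq γ δ t ht) measurableSet_Ioi).2
      ((gamma_intble γ δ hγ hδ).const_mul _)
  · rw [subst_eq]
    rw [setIntegral_congr_fun measurableSet_Ioi (fun t ht => comp_eq γ δ t ht)]
    rw [integral_const_mul, gamma_eq γ δ hγ hδ]

end HeatBallAux

open HeatBallAux Set in
/-- For `N ≥ 1`, `α > 0` and `β < α + 1`, with
`E_* = {(r,σ) : 0 < σ < 1/(4π), 0 < r < √(−2Nσ log(4πσ))} ⊂ ℝ²`: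
`∫_{E_*} r^{2α−1} σ^{−β} dr dσ
   = 2^{2β−α−3} π^{β−α−1} N^α Γ(α+1) / (α (α−β+1)^{α+1})`. -/
theorem heat_ball_profile_integral
    (N : ℕ) (hN : 1 ≤ N) (α β : ℝ) (hα : 0 < α) (hβ : β < α + 1) :
    ∫ q in {q : ℝ × ℝ | 0 < q.2 ∧ q.2 < 1 / (4 * Real.pi) ∧ 0 < q.1 ∧
        q.1 < Real.sqrt (-(2 * N * q.2 * Real.log (4 * Real.pi * q.2)))},
      q.1 ^ (2 * α - 1) * q.2 ^ (-β) =
    2 ^ (2 * β - α - 3) * Real.pi ^ (β - α - 1) * (N : ℝ) ^ α * Real.Gamma (α + 1) /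
      (α * (α - β + 1) ^ (α + 1)) := by
  have hπ : (0:ℝ) < 4 * Real.pi := by positivity
  have hN0 : (0:ℝ) < N := by exact_mod_cast hN
  set δ : ℝ := α - β + 1 with hδdef
  have hδ : 0 < δ := by simp only [hδdef]; linarith
  set c : ℝ := 1 / (4 * Real.pi) with hcdef
  set R : ℝ → ℝ := fun σ => Real.sqrt (-(2 * N * σ * Real.log (4 * Real.pi * σ))) with hRdef
  set S : Set (ℝ × ℝ) := {q : ℝ × ℝ | 0 < q.2 ∧ q.2 < c ∧ 0 < q.1 ∧ q.1 < R q.2} with hSdef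
  set f : ℝ × ℝ → ℝ := fun q => q.1 ^ (2 * α - 1) * q.2 ^ (-β) with hfdef
  have hS : MeasurableSet S := by
    apply MeasurableSet.inter (measurableSet_lt measurable_const measurable_snd)
    apply MeasurableSet.inter (measurableSet_lt measurable_snd measurable_const)
    apply MeasurableSet.inter (measurableSet_lt measurable_const measurable_fst)
    apply measurableSet_lt measurable_fst
    exact ((((measurable_const.mul measurable_snd).mul
      (Real.measurable_log.comp (measurable_const.mul measurable_snd))).neg).sqrt)
  have hf : Measurable f := by
    apply Measurable.mul <;> measurability
  -- inner integral
  have hInner : ∀ σ ∈ Ioo (0:ℝ) c,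
      ∫ r in Ioo 0 (R σ), r ^ (2 * α - 1) * σ ^ (-β)
        = (2 * N) ^ α / (2 * α) * (σ ^ (δ - 1) * (-Real.log (4 * Real.pi * σ)) ^ α) := by
    rintro σ ⟨hσ0, hσc⟩
    have hlt : 4 * Real.pi * σ < 1 := by
      rw [hcdef, lt_div_iff₀ hπ] at hσc; nlinarith
    have hL : 0 < -Real.log (4 * Real.pi * σ) := by
      have := Real.log_neg (by positivity) hlt; linarith
    set L : ℝ := -Real.log (4 * Real.pi * σ) with hLdef
    have hXnn : (0:ℝ) ≤ 2 * N * (σ * L) := by positivity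
    have hXeq : -(2 * (N:ℝ) * σ * Real.log (4 * Real.pi * σ)) = 2 * N * (σ * L) := by
      rw [hLdef]; ring
    have hR0 : 0 ≤ R σ := Real.sqrt_nonneg _
    rw [MeasureTheory.integral_mul_const]
    have step1 : ∫ r in Ioo (0:ℝ) (R σ), r ^ (2 * α - 1) = (R σ) ^ (2 * α) / (2 * α) := by
      rw [← integral_Ioc_eq_integral_Ioo, ← intervalIntegral.integral_of_le hR0,
        integral_rpow (Or.inl (by linarith)),
        Real.zero_rpow (by intro h; nlinarith : 2 * α - 1 + 1 ≠ 0), sub_zero]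
      norm_num
    have step2 : (R σ) ^ (2 * α) = (2 * N) ^ α * (σ ^ α * L ^ α) := by
      have h1 : R σ = (2 * (N:ℝ) * (σ * L)) ^ ((1:ℝ)/2) := by
        rw [hRdef]; simp only []
        rw [hXeq, Real.sqrt_eq_rpow]
      rw [h1, ← Real.rpow_mul hXnn, show (1:ℝ)/2 * (2*α) = α by ring,
        Real.mul_rpow (by positivity) (by positivity),
        Real.mul_rpow hσ0.le hL.le]
    rw [step1, step2, show σ ^ (δ - 1) = σ ^ α * σ ^ (-β) by
      rw [← Real.rpow_add hσ0]; congr 1; rw [hδdef]; ring]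
    ring
  -- the slice function
  set G : ℝ → ℝ := fun σ => ∫ r in Ioo 0 (R σ), r ^ (2 * α - 1) * σ ^ (-β) with hGdef
  have hGcongr : EqOn G
      (fun σ => (2 * N) ^ α / (2 * α) * (σ ^ (δ - 1) * (-Real.log (4 * Real.pi * σ)) ^ α))
      (Ioo 0 c) := fun σ hσ => hInner σ hσ
  have hGint : IntegrableOn G (Ioo 0 c) := by
    rw [integrableOn_congr_fun hGcongr measurableSet_Ioo]
    exact (keyB α δ hα hδ).1.const_mul _
  have hGval : ∫ σ in Ioo 0 c, G σ
      = (2 * N) ^ α / (2 * α) * ((4 * Real.pi) ^ (-δ) * ((1/δ) ^ (α+1) * Real.Gamma (α+1))) := by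
    rw [setIntegral_congr_fun measurableSet_Ioo hGcongr, MeasureTheory.integral_const_mul,
      (keyB α δ hα hδ).2]
  -- indicator decomposition
  have hmem : ∀ r σ : ℝ, ((r, σ) ∈ S) ↔ (σ ∈ Ioo 0 c ∧ r ∈ Ioo 0 (R σ)) := by
    intro r σ
    simp only [hSdef, Set.mem_setOf_eq, mem_Ioo]
    tauto
  have hind : ∀ r σ : ℝ, S.indicator f (r, σ)
      = (Ioo 0 c).indicator
          (fun σ' => (Ioo 0 (R σ')).indicator (fun r' => r' ^ (2 * α - 1) * σ' ^ (-β)) r) σ := by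
    intro r σ
    by_cases h1 : σ ∈ Ioo 0 c
    · by_cases h2 : r ∈ Ioo 0 (R σ)
      · rw [Set.indicator_of_mem ((hmem r σ).2 ⟨h1, h2⟩), Set.indicator_of_mem h1,
          Set.indicator_of_mem h2]
      · rw [Set.indicator_of_notMem (fun h => h2 ((hmem r σ).1 h).2),
          Set.indicator_of_mem h1, Set.indicator_of_notMem h2]
    · rw [Set.indicator_of_notMem (fun h => h1 ((hmem r σ).1 h).1),
        Set.indicator_of_notMem h1]
  have hslice : ∀ σ : ℝ, ∫ r, S.indicator f (r, σ) = (Ioo 0 c).indicator G σ := by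
    intro σ
    simp_rw [hind]
    by_cases h1 : σ ∈ Ioo 0 c
    · simp only [Set.indicator_of_mem h1]
      rw [MeasureTheory.integral_indicator measurableSet_Ioo]
    · simp [Set.indicator_of_notMem h1]
  have hFnn : ∀ p : ℝ × ℝ, 0 ≤ S.indicator f p := by
    intro p
    apply Set.indicator_nonneg
    rintro q ⟨hq2, _, hq1, _⟩
    have : (0:ℝ) ≤ q.1 ^ (2*α-1) := Real.rpow_nonneg hq1.le _
    have : (0:ℝ) ≤ q.2 ^ (-β) := Real.rpow_nonneg hq2.le _
    simp only [hfdef]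
    positivity
  have hInt1 : ∀ σ : ℝ, Integrable (fun r => S.indicator f (r, σ)) := by
    intro σ
    simp_rw [hind]
    by_cases h1 : σ ∈ Ioo 0 c
    · simp only [Set.indicator_of_mem h1]
      refine (IntegrableOn.integrable_indicator ?_ measurableSet_Ioo)
      exact ((intervalIntegral.intervalIntegrable_rpow'
        (by linarith : (-1:ℝ) < 2*α-1) (a := 0) (b := R σ)).1.mono_set
        Ioo_subset_Ioc_self).mul_const _
    · simp [Set.indicator_of_notMem h1]
  have hIntF : Integrable (S.indicator f) (volume.prod volume) := by
    rw [integrable_prod_iff' (hf.indicator hS).aestronglyMeasurable]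
    refine ⟨Filter.Eventually.of_forall hInt1, ?_⟩
    have heq : (fun σ => ∫ r, ‖S.indicator f (r, σ)‖) = (Ioo 0 c).indicator G := by
      funext σ
      rw [← hslice σ]
      congr 1
      funext r
      rw [Real.norm_eq_abs, abs_of_nonneg (hFnn _)]
    rw [heq]
    exact hGint.integrable_indicator measurableSet_Ioo
  -- Fubini
  have main : ∫ q in S, f q
      = (2 * N) ^ α / (2 * α) * ((4 * Real.pi) ^ (-δ) * ((1/δ) ^ (α+1) * Real.Gamma (α+1))) := by
    rw [← MeasureTheory.integral_indicator hS]
    rw [show (volume : Measure (ℝ × ℝ)) = (volume : Measure ℝ).prod volume from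
      MeasureTheory.Measure.volume_eq_prod ℝ ℝ]
    rw [MeasureTheory.integral_prod_symm _ hIntF]
    simp_rw [hslice]
    rw [MeasureTheory.integral_indicator measurableSet_Ioo, hGval]
  rw [main]
  -- final algebra
  have e1 : ((2:ℝ) * N) ^ α = 2 ^ α * (N:ℝ) ^ α := Real.mul_rpow (by norm_num) hN0.le
  have h4 : (4:ℝ) = 2 ^ (2:ℝ) := by
    rw [show (2:ℝ) ^ (2:ℝ) = 2 ^ (2:ℕ) from by rw [← Real.rpow_natCast]; norm_num]
    norm_num
  have e2 : ((4:ℝ) * Real.pi) ^ (-δ) = 2 ^ (2*β - 2*α - 2) * Real.pi ^ (β - α - 1) := by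
    rw [Real.mul_rpow (by norm_num) Real.pi_pos.le, h4, ← Real.rpow_mul (by norm_num)]
    congr 1
    · congr 1; rw [hδdef]; ring
    · congr 1; rw [hδdef]; ring
  have e3 : ((1:ℝ)/δ) ^ (α+1) = (δ ^ (α+1))⁻¹ := by
    rw [one_div, Real.inv_rpow hδ.le]
  have e4 : (2:ℝ) ^ α * 2 ^ (2*β - 2*α - 2) = 2 ^ (2*β - α - 3) * 2 := by
    have h5 : (2:ℝ) ^ (2*β - α - 3) * 2 = 2 ^ (2*β - α - 3) * 2 ^ (1:ℝ) := by
      rw [Real.rpow_one]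
    rw [h5, ← Real.rpow_add two_pos, ← Real.rpow_add two_pos]
    congr 1; ring
  have hδpow : (0:ℝ) < δ ^ (α+1) := Real.rpow_pos_of_pos hδ _
  have hαne : α ≠ 0 := hα.ne'
  have hDne : δ ^ (α+1) ≠ 0 := hδpow.ne'
  rw [e1, e2, e3]
  field_simp
  rw [show 2 * (β - α - 1) = 2 * β - 2 * α - 2 by ring]
  linarith [e4]
end
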